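/- arXiv:1601.06505 — 4 statements merged into one kernel-verified Lean document; each statement's English description precedes it below -/
import Mathlib

section
/- For all n ≥ 1, the number of simsun permutations π of [n+1] that start with an ascent (π(1) < π(2)) and have k interior peaks equals (1+k)·S(n,k); the number starting with a descent (π(1) > π(2)) with k interior peaks equals (n-2k)·S(n,k). -/
/-- The one-line word of a permutation, with values in `{1, …, n}`. -/
def wordOf {n : ℕ} (π : Equiv.Perm (Fin n)) : List ℕ :=
  List.ofFn fun i => (π i : ℕ) + 1

/-- A list has no double descents. -/
def NoDoubleDescents (l : List ℕ) : Prop :=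
  ∀ i : ℕ, i + 2 < l.length →
    ¬ (l.getD (i+1) 0 < l.getD i 0 ∧ l.getD (i+2) 0 < l.getD (i+1) 0)

/-- A permutation is simsun if for all `k` its subword restricted to `{1,…,k}`
has no double descents. -/
def IsSimsun {n : ℕ} (π : Equiv.Perm (Fin n)) : Prop :=
  ∀ k : ℕ, NoDoubleDescents ((wordOf π).filter (fun x => decide (x ≤ k)))

/-- Number of descents of a list. -/
def desList (l : List ℕ) : ℕ :=
  ((Finset.range l.length).filter
    (fun i => i + 1 < l.length ∧ l.getD (i+1) 0 < l.getD i 0)).card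

/-- Number of descents of a permutation. -/
def desOf {n : ℕ} (π : Equiv.Perm (Fin n)) : ℕ := desList (wordOf π)

/-- Number of interior peaks of a list. -/
def pkList (l : List ℕ) : ℕ :=
  ((Finset.range l.length).filter
    (fun i => 0 < i ∧ i + 1 < l.length ∧
      l.getD (i-1) 0 < l.getD i 0 ∧ l.getD (i+1) 0 < l.getD i 0)).card

/-- Number of interior peaks of a permutation. -/
def pkOf {n : ℕ} (π : Equiv.Perm (Fin n)) : ℕ := pkList (wordOf π)

/-- Number of simsun permutations of `[n]` with `k` descents. -/
noncomputable def Scount (n k : ℕ) : ℕ :=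
  Nat.card {π : Equiv.Perm (Fin n) // IsSimsun π ∧ desOf π = k}

open Finset List Equiv

section Aux


/-! ### basics -/

def Dset (l : List ℕ) : Finset ℕ :=
  (Finset.range l.length).filter
    (fun i => i + 1 < l.length ∧ l.getD (i+1) 0 < l.getD i 0)

lemma desList_eq_card (l : List ℕ) : desList l = (Dset l).card := rfl

lemma mem_Dset {l : List ℕ} {i : ℕ} :
    i ∈ Dset l ↔ i + 1 < l.length ∧ l.getD (i+1) 0 < l.getD i 0 := by
  simp [Dset, Finset.mem_filter, Finset.mem_range]
  intro h; omega

def DescStart (l : List ℕ) : Prop := 2 ≤ l.length ∧ l.getD 1 0 < l.getD 0 0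

instance (l : List ℕ) : Decidable (DescStart l) := by unfold DescStart; infer_instance

lemma wordOf_length {n : ℕ} (π : Equiv.Perm (Fin n)) : (wordOf π).length = n := by
  simp [wordOf]

lemma wordOf_getD {n : ℕ} (π : Equiv.Perm (Fin n)) {i : ℕ} (h : i < n) :
    (wordOf π).getD i 0 = (π ⟨i, h⟩ : ℕ) + 1 := by
  rw [List.getD_eq_getElem _ _ (by simp [wordOf_length, h])]
  simp [wordOf]

lemma wordOf_getD_le {n : ℕ} (π : Equiv.Perm (Fin n)) {i : ℕ} (h : i < n) :
    (wordOf π).getD i 0 ≤ n := by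
  rw [wordOf_getD π h]
  have := (π ⟨i, h⟩).isLt; omega

lemma wordOf_getD_pos {n : ℕ} (π : Equiv.Perm (Fin n)) {i : ℕ} (h : i < n) :
    1 ≤ (wordOf π).getD i 0 := by
  rw [wordOf_getD π h]; omega

lemma wordOf_getD_ne {n : ℕ} (π : Equiv.Perm (Fin n)) {i j : ℕ} (hi : i < n) (hj : j < n)
    (hij : i ≠ j) : (wordOf π).getD i 0 ≠ (wordOf π).getD j 0 := by
  rw [wordOf_getD π hi, wordOf_getD π hj]
  intro h
  have : π ⟨i, hi⟩ = π ⟨j, hj⟩ := by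
    apply Fin.ext; omega
  have := π.injective this
  simp [Fin.ext_iff] at this; omega

lemma Dset_subset {l : List ℕ} : ∀ i ∈ Dset l, i + 1 < l.length := fun i hi => (mem_Dset.1 hi).1

/-- for a no-double-descent word, descents are non-adjacent -/
lemma Dset_nonadj {l : List ℕ} (h : NoDoubleDescents l) {i : ℕ} (hi : i ∈ Dset l) :
    i + 1 ∉ Dset l := by
  intro hi1
  rw [mem_Dset] at hi hi1
  exact h i (by omega) ⟨hi.2, hi1.2⟩

lemma descStart_iff_zero_mem {l : List ℕ} : DescStart l ↔ 0 ∈ Dset l := by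
  rw [mem_Dset, DescStart]; constructor <;> (intro ⟨a, b⟩; exact ⟨by omega, b⟩)

variable {n : ℕ}


def ins (p : Fin (n+1)) (σ : Equiv.Perm (Fin n)) : Equiv.Perm (Fin (n+1)) :=
  (finSuccEquiv' p).trans ((σ.optionCongr).trans (finSuccEquiv' (Fin.last n)).symm)

lemma ins_apply_self (p : Fin (n+1)) (σ : Equiv.Perm (Fin n)) : ins p σ p = Fin.last n := by
  simp [ins, finSuccEquiv'_at, finSuccEquiv'_symm_none]

lemma ins_apply_succAbove (p : Fin (n+1)) (σ : Equiv.Perm (Fin n)) (i : Fin n) :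
    ins p σ (p.succAbove i) = (σ i).castSucc := by
  simp only [ins, Equiv.trans_apply, finSuccEquiv'_succAbove, Equiv.optionCongr_apply,
    Option.map_some]
  exact finSuccEquiv'_symm_some_below (Fin.castSucc_lt_last _)

lemma ins_injective : Function.Injective
    (fun x : Fin (n+1) × Equiv.Perm (Fin n) => ins x.1 x.2) := by
  rintro ⟨p, σ⟩ ⟨q, τ⟩ h
  simp only at h
  have hpq : p = q := by
    have h1 : ins q τ p = Fin.last n := by rw [← h]; exact ins_apply_self p σ
    have h2 : ins q τ q = Fin.last n := ins_apply_self q τ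
    exact (ins q τ).injective (h1.trans h2.symm)
  subst hpq
  have : σ = τ := by
    apply Equiv.ext; intro i
    have h1 := ins_apply_succAbove p σ i
    have h2 := ins_apply_succAbove p τ i
    rw [h] at h1
    have := h1.symm.trans h2
    exact Fin.castSucc_inj.mp this
  rw [this]

lemma ins_surjective : Function.Surjective
    (fun x : Fin (n+1) × Equiv.Perm (Fin n) => ins x.1 x.2) := by
  have hcard : Fintype.card (Fin (n+1) × Equiv.Perm (Fin n))
      = Fintype.card (Equiv.Perm (Fin (n+1))) := by
    simp [Fintype.card_perm, Fintype.card_prod, Nat.factorial_succ]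
  exact ((Fintype.bijective_iff_injective_and_card _).mpr ⟨ins_injective, hcard⟩).2

lemma ins_bijective : Function.Bijective
    (fun x : Fin (n+1) × Equiv.Perm (Fin n) => ins x.1 x.2) :=
  ⟨ins_injective, ins_surjective⟩


lemma ins_getD (p : Fin (n+1)) (σ : Equiv.Perm (Fin n)) {j : ℕ} (hj : j < n+1) :
    (wordOf (ins p σ)).getD j 0 =
      if j < (p:ℕ) then (wordOf σ).getD j 0
      else if j = (p:ℕ) then n + 1
      else (wordOf σ).getD (j-1) 0 := by
  rcases lt_trichotomy j (p:ℕ) with h | h | h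
  · rw [if_pos h]
    have hjn : j < n := by have := p.isLt; omega
    have hc : (Fin.castSucc ⟨j, hjn⟩ : Fin (n+1)) < p := by
      simp [Fin.lt_def, h]
    have : (⟨j, hj⟩ : Fin (n+1)) = p.succAbove ⟨j, hjn⟩ := by
      rw [Fin.succAbove_of_castSucc_lt _ _ hc]
      rfl
    rw [wordOf_getD _ hj, this, ins_apply_succAbove, wordOf_getD _ hjn]
    rfl
  · rw [if_neg (by omega), if_pos h]
    have : (⟨j, hj⟩ : Fin (n+1)) = p := by apply Fin.ext; simp [h]
    rw [wordOf_getD _ hj, this, ins_apply_self]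
    rfl
  · rw [if_neg (by omega), if_neg (by omega)]
    have hj1 : j - 1 < n := by omega
    have hc : p ≤ Fin.castSucc ⟨j - 1, hj1⟩ := by
      simp [Fin.le_def]; omega
    have : (⟨j, hj⟩ : Fin (n+1)) = p.succAbove ⟨j - 1, hj1⟩ := by
      rw [Fin.succAbove_of_le_castSucc _ _ hc]
      apply Fin.ext; simp; omega
    rw [wordOf_getD _ hj, this, ins_apply_succAbove, wordOf_getD _ hj1]
    rfl

lemma word_ins_eq (p : Fin (n+1)) (σ : Equiv.Perm (Fin n)) :
    wordOf (ins p σ) = (wordOf σ).take p ++ (n+1) :: (wordOf σ).drop p := by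
  have hp : (p:ℕ) ≤ n := by omega
  have hlen : ((wordOf σ).take p ++ (n+1) :: (wordOf σ).drop p).length = n + 1 := by
    simp [wordOf_length]; omega
  apply List.ext_getElem (by rw [wordOf_length, hlen])
  intro j h1 h2
  have hj : j < n + 1 := by rwa [wordOf_length] at h1
  have hW := ins_getD p σ (j := j) hj
  rw [List.getD_eq_getElem _ _ h1] at hW
  rw [hW]
  have hlt : ((wordOf σ).take p).length = (p:ℕ) := by simp [wordOf_length]; omega
  rcases lt_trichotomy j (p:ℕ) with h | h | h
  · rw [if_pos h, List.getElem_append_left (by omega), List.getElem_take,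
      List.getD_eq_getElem _ _ (by rw [wordOf_length]; omega)]
  · rw [if_neg (by omega), if_pos h]
    rw [List.getElem_append_right (by omega)]
    simp [hlt, h]
  · rw [if_neg (by omega), if_neg (by omega)]
    rw [List.getElem_append_right (by omega), List.getElem_cons]
    rw [dif_neg (by simp only [hlt]; omega)]
    rw [List.getElem_drop, ← List.getD_eq_getElem]
    congr 1
    simp only [hlt]
    omega

lemma wordOf_mem_le {m : ℕ} (π : Equiv.Perm (Fin m)) : ∀ x ∈ wordOf π, x ≤ m := by
  intro x hx
  simp only [wordOf, List.mem_ofFn] at hx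
  obtain ⟨i, rfl⟩ := hx
  show (π i : ℕ) + 1 ≤ m
  have := (π i).isLt
  omega

lemma filter_all_le {l : List ℕ} {m : ℕ} (h : ∀ x ∈ l, x ≤ m) :
    l.filter (fun x => decide (x ≤ m)) = l := by
  apply List.filter_eq_self.mpr
  intro a ha; simpa using h a ha

lemma filter_word_ins_of_le (p : Fin (n+1)) (σ : Equiv.Perm (Fin n)) {m : ℕ} (hm : m ≤ n) :
    (wordOf (ins p σ)).filter (fun x => decide (x ≤ m)) =
      (wordOf σ).filter (fun x => decide (x ≤ m)) := by
  rw [word_ins_eq, List.filter_append, List.filter_cons]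
  simp only [decide_eq_true_eq, if_neg (by omega : ¬ (n + 1 ≤ m))]
  rw [← List.filter_append, List.take_append_drop]

lemma isSimsun_ins_iff (p : Fin (n+1)) (σ : Equiv.Perm (Fin n)) :
    IsSimsun (ins p σ) ↔ IsSimsun σ ∧ NoDoubleDescents (wordOf (ins p σ)) := by
  constructor
  · intro h
    constructor
    · intro k
      rcases le_or_gt k n with hk | hk
      · rw [← filter_word_ins_of_le p σ hk]; exact h k
      · rw [filter_all_le (fun x hx => le_trans (wordOf_mem_le σ x hx) (by omega)),
          ← filter_all_le (l := wordOf σ) (m := n) (wordOf_mem_le σ),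
          ← filter_word_ins_of_le p σ (le_refl n)]
        exact h n
    · have := h (n+1)
      rwa [filter_all_le (wordOf_mem_le _)] at this
  · rintro ⟨hσ, hno⟩ k
    rcases le_or_gt k n with hk | hk
    · rw [filter_word_ins_of_le p σ hk]; exact hσ k
    · rwa [filter_all_le (fun x hx => le_trans (wordOf_mem_le _ x hx) hk)]

lemma noDD_word {m : ℕ} {π : Equiv.Perm (Fin m)} (h : IsSimsun π) :
    NoDoubleDescents (wordOf π) := by
  have := h m
  rwa [filter_all_le (wordOf_mem_le _)] at this


lemma mem_Dset_ins (p : Fin (n+1)) (σ : Equiv.Perm (Fin n)) {i : ℕ} :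
    i ∈ Dset (wordOf (ins p σ)) ↔
      (i + 1 < (p:ℕ) ∧ i ∈ Dset (wordOf σ)) ∨ (i = (p:ℕ) ∧ (p:ℕ) < n) ∨
      ((p:ℕ) < i ∧ i - 1 ∈ Dset (wordOf σ)) := by
  have hp : (p:ℕ) ≤ n := by omega
  rw [mem_Dset, wordOf_length]
  constructor
  · rintro ⟨hi, hlt⟩
    rw [ins_getD p σ (by omega), ins_getD p σ (by omega)] at hlt
    rcases lt_trichotomy (i+1) (p:ℕ) with h | h | h
    · rw [if_pos h, if_pos (by omega)] at hlt
      exact Or.inl ⟨h, mem_Dset.mpr ⟨by rw [wordOf_length]; omega, hlt⟩⟩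
    · rw [if_neg (by omega), if_pos h, if_pos (by omega)] at hlt
      exact absurd hlt (by have := wordOf_getD_le σ (show i < n by omega); omega)
    · rcases eq_or_lt_of_le (show (p:ℕ) ≤ i by omega) with h2 | h2
      · exact Or.inr (Or.inl ⟨h2.symm, by omega⟩)
      · rw [if_neg (by omega), if_neg (by omega), if_neg (by omega), if_neg (by omega)] at hlt
        refine Or.inr (Or.inr ⟨h2, mem_Dset.mpr ⟨by rw [wordOf_length]; omega, ?_⟩⟩)
        have : i + 1 - 1 = (i - 1) + 1 := by omega
        rwa [this] at hlt
  · rintro (⟨h, hd⟩ | ⟨h, hd⟩ | ⟨h, hd⟩)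
    · rw [mem_Dset, wordOf_length] at hd
      refine ⟨by omega, ?_⟩
      rw [ins_getD p σ (by omega), ins_getD p σ (by omega), if_pos h, if_pos (by omega)]
      exact hd.2
    · refine ⟨by omega, ?_⟩
      rw [ins_getD p σ (by omega), ins_getD p σ (by omega), if_neg (by omega),
        if_neg (by omega), if_neg (by omega), if_pos h]
      have := wordOf_getD_le σ (show i + 1 - 1 < n by omega)
      omega
    · rw [mem_Dset, wordOf_length] at hd
      refine ⟨by omega, ?_⟩
      rw [ins_getD p σ (by omega), ins_getD p σ (by omega), if_neg (by omega),
        if_neg (by omega), if_neg (by omega), if_neg (by omega)]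
      have h1 : i + 1 - 1 = (i - 1) + 1 := by omega
      rw [h1]
      exact hd.2

lemma Dset_ins_eq (p : Fin (n+1)) (σ : Equiv.Perm (Fin n)) :
    Dset (wordOf (ins p σ)) =
      ((Dset (wordOf σ)).filter (fun i => i + 1 < (p:ℕ)))
      ∪ (if (p:ℕ) < n then {(p:ℕ)} else ∅)
      ∪ ((Dset (wordOf σ)).filter (fun i => (p:ℕ) ≤ i)).image (· + 1) := by
  ext i
  rw [mem_Dset_ins]
  simp only [Finset.mem_union, Finset.mem_filter, Finset.mem_image]
  constructor
  · rintro (⟨h, hd⟩ | ⟨h, hd⟩ | ⟨h, hd⟩)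
    · exact Or.inl (Or.inl ⟨hd, h⟩)
    · subst h
      rw [if_pos hd]
      exact Or.inl (Or.inr (Finset.mem_singleton_self _))
    · exact Or.inr ⟨i - 1, ⟨hd, by omega⟩, by omega⟩
  · rintro (( ⟨hd, h⟩ | h) | ⟨j, ⟨hj, hpj⟩, rfl⟩)
    · exact Or.inl ⟨h, hd⟩
    · rcases lt_or_ge (p:ℕ) n with hpn | hpn
      · rw [if_pos hpn, Finset.mem_singleton] at h
        exact Or.inr (Or.inl ⟨h, hpn⟩)
      · rw [if_neg (by omega)] at h
        exact absurd h (Finset.notMem_empty i)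
    · exact Or.inr (Or.inr ⟨by omega, by simpa using hj⟩)

lemma card_Dset_ins (p : Fin (n+1)) (σ : Equiv.Perm (Fin n)) :
    (Dset (wordOf (ins p σ))).card
        + (if 0 < (p:ℕ) ∧ (p:ℕ) - 1 ∈ Dset (wordOf σ) then 1 else 0)
      = (Dset (wordOf σ)).card + (if (p:ℕ) < n then 1 else 0) := by
  classical
  set D := Dset (wordOf σ) with hD
  have hDb : ∀ i ∈ D, i + 1 < n := by
    intro i hi
    have := (mem_Dset.mp hi).1
    rwa [wordOf_length] at this
  rw [Dset_ins_eq]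
  set A := D.filter (fun i => i + 1 < (p:ℕ)) with hA
  set B := (if (p:ℕ) < n then ({(p:ℕ)} : Finset ℕ) else ∅) with hB
  set C := (D.filter (fun i => (p:ℕ) ≤ i)).image (· + 1) with hC
  have hmemB : ∀ i ∈ B, i = (p:ℕ) := by
    intro i hi
    rcases lt_or_ge (p:ℕ) n with h | h
    · rw [hB, if_pos h, Finset.mem_singleton] at hi; exact hi
    · rw [hB, if_neg (by omega)] at hi; exact absurd hi (Finset.notMem_empty i)
  have hd1 : Disjoint A B := by
    rw [Finset.disjoint_left]
    intro i hi hib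
    have := (Finset.mem_filter.mp hi).2
    have := hmemB i hib
    omega
  have hd2 : Disjoint (A ∪ B) C := by
    rw [Finset.disjoint_left]
    intro i hi hic
    obtain ⟨j, hj, rfl⟩ := Finset.mem_image.mp hic
    have hj2 := (Finset.mem_filter.mp hj).2
    rcases Finset.mem_union.mp hi with h | h
    · have := (Finset.mem_filter.mp h).2; omega
    · have := hmemB _ h; omega
  rw [Finset.card_union_of_disjoint hd2, Finset.card_union_of_disjoint hd1]
  have hcB : B.card = if (p:ℕ) < n then 1 else 0 := by
    rcases lt_or_ge (p:ℕ) n with h | h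
    · rw [hB, if_pos h, if_pos h, Finset.card_singleton]
    · rw [hB, if_neg (by omega), if_neg (by omega), Finset.card_empty]
  have hcC : C.card = (D.filter (fun i => (p:ℕ) ≤ i)).card := by
    rw [hC]
    exact Finset.card_image_of_injective _ (add_left_injective 1)
  rw [hcB, hcC]
  have hsplit : D.filter (fun i => ¬ (i + 1 < (p:ℕ)))
      = D.filter (fun i => (p:ℕ) ≤ i) ∪ D.filter (fun i => i + 1 = (p:ℕ)) := by
    rw [← Finset.filter_or]
    apply Finset.filter_congr
    intro i _
    constructor
    · intro h; omega
    · intro h; omega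
  have hd3 : Disjoint (D.filter (fun i => (p:ℕ) ≤ i)) (D.filter (fun i => i + 1 = (p:ℕ))) := by
    rw [Finset.disjoint_left]
    intro i hi hi2
    have := (Finset.mem_filter.mp hi).2
    have := (Finset.mem_filter.mp hi2).2
    omega
  have hcard : A.card + ((D.filter (fun i => (p:ℕ) ≤ i)).card
      + (D.filter (fun i => i + 1 = (p:ℕ))).card) = D.card := by
    rw [← Finset.card_union_of_disjoint hd3, ← hsplit, hA]
    exact Finset.card_filter_add_card_filter_not _
  have hlast : (D.filter (fun i => i + 1 = (p:ℕ))).card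
      = if 0 < (p:ℕ) ∧ (p:ℕ) - 1 ∈ D then 1 else 0 := by
    by_cases h : 0 < (p:ℕ) ∧ (p:ℕ) - 1 ∈ D
    · rw [if_pos h]
      have : D.filter (fun i => i + 1 = (p:ℕ)) = {(p:ℕ) - 1} := by
        ext i
        simp only [Finset.mem_filter, Finset.mem_singleton]
        constructor
        · intro ⟨_, h2⟩; omega
        · intro h2; subst h2; exact ⟨h.2, by omega⟩
      rw [this, Finset.card_singleton]
    · rw [if_neg h]
      have : D.filter (fun i => i + 1 = (p:ℕ)) = ∅ := by
        ext i
        simp only [Finset.mem_filter, Finset.notMem_empty, iff_false]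
        intro ⟨hi, h2⟩
        refine h ⟨by omega, ?_⟩
        have hip : i = (p:ℕ) - 1 := by omega
        rwa [hip] at hi
      rw [this, Finset.card_empty]
  omega

lemma noDD_iff {l : List ℕ} : NoDoubleDescents l ↔ ∀ i, i ∈ Dset l → i + 1 ∉ Dset l := by
  unfold NoDoubleDescents
  constructor
  · intro h i hi hi1
    rw [mem_Dset] at hi hi1
    exact h i (by omega) ⟨hi.2, hi1.2⟩
  · intro h i hlen ⟨h1, h2⟩
    exact h i (mem_Dset.mpr ⟨by omega, h1⟩) (mem_Dset.mpr ⟨hlen, h2⟩)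

lemma noDD_ins_iff (p : Fin (n+1)) (σ : Equiv.Perm (Fin n))
    (hno : NoDoubleDescents (wordOf σ)) :
    NoDoubleDescents (wordOf (ins p σ)) ↔ (p:ℕ) ∉ Dset (wordOf σ) := by
  rw [noDD_iff] at hno ⊢
  constructor
  · intro h hp
    have hb := (mem_Dset.mp hp).1
    rw [wordOf_length] at hb
    refine h (p:ℕ) ?_ ?_
    · exact (mem_Dset_ins p σ).mpr (Or.inr (Or.inl ⟨rfl, by omega⟩))
    · exact (mem_Dset_ins p σ).mpr (Or.inr (Or.inr ⟨by omega, by simpa using hp⟩))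
  · intro hp i hi hi1
    rw [mem_Dset_ins] at hi hi1
    have hb : ∀ j ∈ Dset (wordOf σ), j + 1 < n := by
      intro j hj
      have := (mem_Dset.mp hj).1
      rwa [wordOf_length] at this
    rcases hi with ⟨h1, h2⟩ | ⟨h1, h2⟩ | ⟨h1, h2⟩ <;>
      rcases hi1 with ⟨g1, g2⟩ | ⟨g1, g2⟩ | ⟨g1, g2⟩
    · exact hno i h2 g2
    · omega
    · omega
    · omega
    · omega
    · have hii : i + 1 - 1 = i := by omega
      rw [hii] at g2
      exact hp (h1 ▸ g2)
    · omega
    · omega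
    · have h3 : i + 1 - 1 = (i - 1) + 1 := by omega
      rw [h3] at g2
      exact hno _ h2 g2

lemma descStart_ins_iff (p : Fin (n+1)) (σ : Equiv.Perm (Fin n)) (hn : 1 ≤ n) :
    DescStart (wordOf (ins p σ)) ↔
      ((p:ℕ) = 0 ∨ (2 ≤ (p:ℕ) ∧ DescStart (wordOf σ))) := by
  have hp : (p:ℕ) ≤ n := by omega
  unfold DescStart
  rw [wordOf_length, wordOf_length]
  rw [ins_getD p σ (show (1:ℕ) < n + 1 by omega), ins_getD p σ (show (0:ℕ) < n + 1 by omega)]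
  rcases Nat.lt_or_ge (0:ℕ) (p:ℕ) with h0 | h0
  · rcases Nat.lt_or_ge (1:ℕ) (p:ℕ) with h1 | h1
    · rw [if_pos h1, if_pos h0]
      constructor
      · rintro ⟨_, hd⟩
        exact Or.inr ⟨by omega, by
          refine ⟨?_, hd⟩
          omega⟩
      · rintro (h | ⟨_, _, hd⟩)
        · omega
        · exact ⟨by omega, hd⟩
    · have h1' : (p:ℕ) = 1 := by omega
      rw [if_neg (by omega), if_pos (by omega), if_pos h0]
      have := wordOf_getD_le σ (show (0:ℕ) < n by omega)
      constructor
      · rintro ⟨_, hd⟩; omega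
      · rintro (h | ⟨h, _⟩) <;> omega
  · have h0' : (p:ℕ) = 0 := by omega
    rw [if_neg (by omega), if_neg (by omega), if_neg (by omega), if_pos h0'.symm]
    have := wordOf_getD_le σ (show (1:ℕ) - 1 < n by omega)
    exact ⟨fun _ => Or.inl h0', fun _ => ⟨by omega, by omega⟩⟩

lemma card_fin_filter (C : ℕ → Prop) [DecidablePred C] :
    ((Finset.univ : Finset (Fin (n+1))).filter (fun p : Fin (n+1) => C (p:ℕ))).card
      = ((Finset.range (n+1)).filter C).card := by
  have himg : (Finset.range (n+1)).filter C
      = ((Finset.univ : Finset (Fin (n+1))).filter (fun p : Fin (n+1) => C (p:ℕ))).image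
          Fin.val := by
    ext q
    simp only [Finset.mem_image, Finset.mem_filter, Finset.mem_range, Finset.mem_univ,
      true_and]
    constructor
    · intro ⟨h1, h2⟩
      exact ⟨⟨q, h1⟩, h2, rfl⟩
    · rintro ⟨p, hp, rfl⟩
      exact ⟨p.isLt, hp⟩
  rw [himg, Finset.card_image_of_injective _ Fin.val_injective]

open scoped Classical in
noncomputable def cntA (σ : Equiv.Perm (Fin n)) (d : ℕ) : ℕ :=
  ((Finset.univ : Finset (Fin (n+1))).filter (fun p =>
    IsSimsun (ins p σ) ∧ ¬ DescStart (wordOf (ins p σ)) ∧ desOf (ins p σ) = d)).card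

open scoped Classical in
noncomputable def cntB (σ : Equiv.Perm (Fin n)) (d : ℕ) : ℕ :=
  ((Finset.univ : Finset (Fin (n+1))).filter (fun p =>
    IsSimsun (ins p σ) ∧ DescStart (wordOf (ins p σ)) ∧ desOf (ins p σ) = d)).card

section Counting

variable {σ : Equiv.Perm (Fin n)}

open scoped Classical

lemma ins_cond_iff (hσ : IsSimsun σ) (hn : 1 ≤ n) (p : Fin (n+1)) (d : ℕ) :
    (IsSimsun (ins p σ) ∧ DescStart (wordOf (ins p σ)) ∧ desOf (ins p σ) = d) ↔
      ((p:ℕ) ∉ Dset (wordOf σ) ∧ ((p:ℕ) = 0 ∨ (2 ≤ (p:ℕ) ∧ DescStart (wordOf σ))) ∧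
        d + (if 0 < (p:ℕ) ∧ (p:ℕ) - 1 ∈ Dset (wordOf σ) then 1 else 0)
          = (Dset (wordOf σ)).card + (if (p:ℕ) < n then 1 else 0)) := by
  have h1 : IsSimsun (ins p σ) ↔ (p:ℕ) ∉ Dset (wordOf σ) := by
    rw [isSimsun_ins_iff, noDD_ins_iff p σ (noDD_word hσ)]
    exact ⟨fun h => h.2, fun h => ⟨hσ, h⟩⟩
  have h2 := descStart_ins_iff p σ hn
  have h3 := card_Dset_ins p σ
  have h4 : desOf (ins p σ) = d ↔
      d + (if 0 < (p:ℕ) ∧ (p:ℕ) - 1 ∈ Dset (wordOf σ) then 1 else 0)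
        = (Dset (wordOf σ)).card + (if (p:ℕ) < n then 1 else 0) := by
    show desList (wordOf (ins p σ)) = d ↔ _
    rw [desList_eq_card]
    omega
  rw [h1, h2, h4]

lemma ins_cond_iff' (hσ : IsSimsun σ) (hn : 1 ≤ n) (p : Fin (n+1)) (d : ℕ) :
    (IsSimsun (ins p σ) ∧ ¬ DescStart (wordOf (ins p σ)) ∧ desOf (ins p σ) = d) ↔
      ((p:ℕ) ∉ Dset (wordOf σ) ∧ ¬((p:ℕ) = 0 ∨ (2 ≤ (p:ℕ) ∧ DescStart (wordOf σ))) ∧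
        d + (if 0 < (p:ℕ) ∧ (p:ℕ) - 1 ∈ Dset (wordOf σ) then 1 else 0)
          = (Dset (wordOf σ)).card + (if (p:ℕ) < n then 1 else 0)) := by
  have h1 : IsSimsun (ins p σ) ↔ (p:ℕ) ∉ Dset (wordOf σ) := by
    rw [isSimsun_ins_iff, noDD_ins_iff p σ (noDD_word hσ)]
    exact ⟨fun h => h.2, fun h => ⟨hσ, h⟩⟩
  have h2 := descStart_ins_iff p σ hn
  have h3 := card_Dset_ins p σ
  have h4 : desOf (ins p σ) = d ↔
      d + (if 0 < (p:ℕ) ∧ (p:ℕ) - 1 ∈ Dset (wordOf σ) then 1 else 0)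
        = (Dset (wordOf σ)).card + (if (p:ℕ) < n then 1 else 0) := by
    show desList (wordOf (ins p σ)) = d ↔ _
    rw [desList_eq_card]
    omega
  rw [h1, h2, h4]

lemma cntA_eq (hσ : IsSimsun σ) (hn : 1 ≤ n) (d : ℕ) :
    cntA σ d = ((Finset.range (n+1)).filter (fun q =>
      q ∉ Dset (wordOf σ) ∧ ¬(q = 0 ∨ (2 ≤ q ∧ DescStart (wordOf σ))) ∧
      d + (if 0 < q ∧ q - 1 ∈ Dset (wordOf σ) then 1 else 0)
        = (Dset (wordOf σ)).card + (if q < n then 1 else 0))).card := by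
  rw [cntA, ← card_fin_filter]
  congr 1
  apply Finset.filter_congr
  intro p _
  rw [ins_cond_iff' hσ hn p d]

lemma cntB_eq (hσ : IsSimsun σ) (hn : 1 ≤ n) (d : ℕ) :
    cntB σ d = ((Finset.range (n+1)).filter (fun q =>
      q ∉ Dset (wordOf σ) ∧ (q = 0 ∨ (2 ≤ q ∧ DescStart (wordOf σ))) ∧
      d + (if 0 < q ∧ q - 1 ∈ Dset (wordOf σ) then 1 else 0)
        = (Dset (wordOf σ)).card + (if q < n then 1 else 0))).card := by
  rw [cntB, ← card_fin_filter]
  congr 1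
  apply Finset.filter_congr
  intro p _
  rw [ins_cond_iff hσ hn p d]

lemma hDb_fact (σ : Equiv.Perm (Fin n)) : ∀ i ∈ Dset (wordOf σ), i + 1 < n := by
  intro i hi
  have := (mem_Dset.mp hi).1
  rwa [wordOf_length] at this

lemma hDadj_fact (hσ : IsSimsun σ) : ∀ i ∈ Dset (wordOf σ), i + 1 ∉ Dset (wordOf σ) :=
  fun _ hi => Dset_nonadj (noDD_word hσ) hi

lemma card_D_union (hσ : IsSimsun σ) :
    ((Dset (wordOf σ)) ∪ (Dset (wordOf σ)).image (· + 1)).card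
      = 2 * (Dset (wordOf σ)).card := by
  rw [Finset.card_union_of_disjoint, Finset.card_image_of_injective _ (add_left_injective 1)]
  · omega
  · rw [Finset.disjoint_left]
    rintro i hi hi2
    obtain ⟨j, hj, rfl⟩ := Finset.mem_image.mp hi2
    exact hDadj_fact hσ j hj hi

lemma two_k_noDesc (hσ : IsSimsun σ) (hn : 1 ≤ n) (hnd : ¬ DescStart (wordOf σ)) :
    2 * (Dset (wordOf σ)).card + 1 ≤ n := by
  have h0D : 0 ∉ Dset (wordOf σ) := fun h => hnd (descStart_iff_zero_mem.mpr h)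
  have hsub : (Dset (wordOf σ)) ∪ (Dset (wordOf σ)).image (· + 1) ⊆ Finset.Ico 1 n := by
    intro i hi
    rcases Finset.mem_union.mp hi with h | h
    · have := hDb_fact σ i h
      refine Finset.mem_Ico.mpr ⟨?_, by omega⟩
      rcases Nat.eq_zero_or_pos i with h0 | h0
      · exact absurd (h0 ▸ h) h0D
      · omega
    · obtain ⟨j, hj, rfl⟩ := Finset.mem_image.mp h
      have := hDb_fact σ j hj
      exact Finset.mem_Ico.mpr ⟨by omega, by omega⟩
  have := Finset.card_le_card hsub
  rw [card_D_union hσ, Nat.card_Ico] at this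
  omega

lemma two_k_desc (hσ : IsSimsun σ) (hd : DescStart (wordOf σ)) :
    2 * (Dset (wordOf σ)).card ≤ n := by
  have hsub : (Dset (wordOf σ)) ∪ (Dset (wordOf σ)).image (· + 1) ⊆ Finset.range n := by
    intro i hi
    rcases Finset.mem_union.mp hi with h | h
    · have := hDb_fact σ i h
      exact Finset.mem_range.mpr (by omega)
    · obtain ⟨j, hj, rfl⟩ := Finset.mem_image.mp h
      have := hDb_fact σ j hj
      exact Finset.mem_range.mpr (by omega)
  have := Finset.card_le_card hsub
  rw [card_D_union hσ, Finset.card_range] at this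
  omega

lemma cntA_noDesc (hσ : IsSimsun σ) (hn : 1 ≤ n) (hnd : ¬ DescStart (wordOf σ)) (d : ℕ) :
    cntA σ d = (if d = (Dset (wordOf σ)).card then (Dset (wordOf σ)).card + 1 else 0)
      + (if d = (Dset (wordOf σ)).card + 1
          then n - 1 - 2 * (Dset (wordOf σ)).card else 0) := by
  classical
  rw [cntA_eq hσ hn d]
  set D := Dset (wordOf σ) with hD
  set k := D.card with hk
  have hDb : ∀ i ∈ D, i + 1 < n := hDb_fact σ
  have hDadj : ∀ i ∈ D, i + 1 ∉ D := hDadj_fact hσ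
  have h0D : 0 ∉ D := fun h => hnd (descStart_iff_zero_mem.mpr h)
  by_cases hd1 : d = k
  · rw [if_pos hd1, if_neg (by omega)]
    have hset : (Finset.range (n+1)).filter (fun q =>
        q ∉ D ∧ ¬(q = 0 ∨ (2 ≤ q ∧ DescStart (wordOf σ))) ∧
        d + (if 0 < q ∧ q - 1 ∈ D then 1 else 0) = k + (if q < n then 1 else 0))
        = D.image (· + 1) ∪ {n} := by
      ext q
      simp only [Finset.mem_filter, Finset.mem_range, Finset.mem_union, Finset.mem_image,
        Finset.mem_singleton]
      constructor
      · rintro ⟨hq, hqD, hstart, heq⟩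
        by_cases hqn : q = n
        · exact Or.inr hqn
        · left
          have he : 0 < q ∧ q - 1 ∈ D := by
            by_contra hc
            rw [if_neg hc, if_pos (by omega)] at heq
            omega
          exact ⟨q - 1, he.2, by omega⟩
      · rintro (⟨j, hj, rfl⟩ | hqn)
        · have hjb := hDb j hj
          refine ⟨by omega, hDadj j hj, ?_, ?_⟩
          · rintro (hc | ⟨_, hc⟩)
            · omega
            · exact hnd hc
          · rw [if_pos ⟨by omega, by simpa using hj⟩, if_pos (by omega)]
            omega
        · refine ⟨by omega, fun h => by have := hDb q h; omega, ?_, ?_⟩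
          · rintro (hc | ⟨_, hc⟩)
            · omega
            · exact hnd hc
          · rw [if_neg (fun hc => by have := hDb _ hc.2; omega), if_neg (by omega)]
            omega
    have hdisj : Disjoint (D.image (· + 1)) ({n} : Finset ℕ) := by
      rw [Finset.disjoint_left]
      rintro i hi hi2
      obtain ⟨j, hj, rfl⟩ := Finset.mem_image.mp hi
      rw [Finset.mem_singleton] at hi2
      have := hDb j hj
      omega
    rw [hset, Finset.card_union_of_disjoint hdisj, Finset.card_image_of_injective _
      (add_left_injective 1), Finset.card_singleton]
  · by_cases hd2 : d = k + 1
    · rw [if_neg hd1, if_pos hd2]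
      have hset : (Finset.range (n+1)).filter (fun q =>
          q ∉ D ∧ ¬(q = 0 ∨ (2 ≤ q ∧ DescStart (wordOf σ))) ∧
          d + (if 0 < q ∧ q - 1 ∈ D then 1 else 0) = k + (if q < n then 1 else 0))
          = Finset.Ico 1 n \ (D ∪ D.image (· + 1)) := by
        ext q
        simp only [Finset.mem_filter, Finset.mem_range, Finset.mem_sdiff, Finset.mem_Ico,
          Finset.mem_union, Finset.mem_image]
        constructor
        · rintro ⟨hq, hqD, hstart, heq⟩
          have hq0 : q ≠ 0 := fun h => hstart (Or.inl h)
          have hqn : q < n := by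
            by_contra hc
            by_cases he : 0 < q ∧ q - 1 ∈ D
            · rw [if_pos he, if_neg hc] at heq; omega
            · rw [if_neg he, if_neg hc] at heq; omega
          have he : ¬ (0 < q ∧ q - 1 ∈ D) := by
            intro hc
            rw [if_pos hc, if_pos hqn] at heq
            omega
          refine ⟨⟨by omega, hqn⟩, ?_⟩
          rintro (h | ⟨j, hj, rfl⟩)
          · exact hqD h
          · exact he ⟨by omega, by simpa using hj⟩
        · rintro ⟨⟨h1, h2⟩, h3⟩
          refine ⟨by omega, fun h => h3 (Or.inl h), ?_, ?_⟩
          · rintro (hc | ⟨_, hc⟩)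
            · omega
            · exact hnd hc
          · rw [if_neg, if_pos h2]
            · omega
            · rintro ⟨hq0, hqm⟩
              exact h3 (Or.inr ⟨q - 1, hqm, by omega⟩)
      have hsub : D ∪ D.image (· + 1) ⊆ Finset.Ico 1 n := by
        intro i hi
        rcases Finset.mem_union.mp hi with h | h
        · have := hDb i h
          refine Finset.mem_Ico.mpr ⟨?_, by omega⟩
          rcases Nat.eq_zero_or_pos i with h0 | h0
          · exact absurd (h0 ▸ h) h0D
          · omega
        · obtain ⟨j, hj, rfl⟩ := Finset.mem_image.mp h
          have := hDb j hj
          exact Finset.mem_Ico.mpr ⟨by omega, by omega⟩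
      rw [hset, Finset.card_sdiff_of_subset hsub, card_D_union hσ, Nat.card_Ico]
      simp only [← hD]
      omega
    · rw [if_neg hd1, if_neg hd2]
      convert Finset.card_empty
      rw [Finset.eq_empty_iff_forall_notMem]
      intro q hq
      rw [Finset.mem_filter] at hq
      obtain ⟨_, hqD, hstart, heq⟩ := hq
      by_cases he : 0 < q ∧ q - 1 ∈ D
      · have hf : q < n := by have := hDb _ he.2; omega
        rw [if_pos he, if_pos hf] at heq
        omega
      · rw [if_neg he] at heq
        by_cases hf : q < n
        · rw [if_pos hf] at heq; omega
        · rw [if_neg hf] at heq; omega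

lemma cntB_noDesc (hσ : IsSimsun σ) (hn : 1 ≤ n) (hnd : ¬ DescStart (wordOf σ)) (d : ℕ) :
    cntB σ d = if d = (Dset (wordOf σ)).card + 1 then 1 else 0 := by
  classical
  rw [cntB_eq hσ hn d]
  set D := Dset (wordOf σ) with hD
  set k := D.card with hk
  have h0D : 0 ∉ D := fun h => hnd (descStart_iff_zero_mem.mpr h)
  by_cases hd : d = k + 1
  · rw [if_pos hd]
    have hset : (Finset.range (n+1)).filter (fun q =>
        q ∉ D ∧ (q = 0 ∨ (2 ≤ q ∧ DescStart (wordOf σ))) ∧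
        d + (if 0 < q ∧ q - 1 ∈ D then 1 else 0) = k + (if q < n then 1 else 0))
        = {0} := by
      ext q
      simp only [Finset.mem_filter, Finset.mem_range, Finset.mem_singleton]
      constructor
      · rintro ⟨_, _, hstart, _⟩
        rcases hstart with h | ⟨_, hc⟩
        · exact h
        · exact absurd hc hnd
      · rintro rfl
        refine ⟨by omega, h0D, Or.inl rfl, ?_⟩
        rw [if_neg (fun hc : 0 < 0 ∧ 0 - 1 ∈ D => absurd hc.1 (lt_irrefl 0)),
          if_pos (show 0 < n by omega)]
        omega
    rw [hset, Finset.card_singleton]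
  · rw [if_neg hd]
    convert Finset.card_empty
    rw [Finset.eq_empty_iff_forall_notMem]
    intro q hq
    rw [Finset.mem_filter] at hq
    obtain ⟨_, hqD, hstart, heq⟩ := hq
    have hq0 : q = 0 := by
      rcases hstart with h | ⟨_, hc⟩
      · exact h
      · exact absurd hc hnd
    subst hq0
    rw [if_neg (fun hc : 0 < 0 ∧ 0 - 1 ∈ D => absurd hc.1 (lt_irrefl 0)),
      if_pos (show 0 < n by omega)] at heq
    omega

lemma cntA_desc (hσ : IsSimsun σ) (hn : 1 ≤ n) (hd : DescStart (wordOf σ)) (d : ℕ) :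
    cntA σ d = if d = (Dset (wordOf σ)).card then 1 else 0 := by
  classical
  rw [cntA_eq hσ hn d]
  set D := Dset (wordOf σ) with hD
  set k := D.card with hk
  have h0D : 0 ∈ D := descStart_iff_zero_mem.mp hd
  have h1D : 1 ∉ D := hDadj_fact hσ 0 h0D
  have hn2 : 2 ≤ n := by
    have := hd.1
    rwa [wordOf_length] at this
  by_cases hdk : d = k
  · rw [if_pos hdk]
    have hset : (Finset.range (n+1)).filter (fun q =>
        q ∉ D ∧ ¬(q = 0 ∨ (2 ≤ q ∧ DescStart (wordOf σ))) ∧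
        d + (if 0 < q ∧ q - 1 ∈ D then 1 else 0) = k + (if q < n then 1 else 0))
        = {1} := by
      ext q
      simp only [Finset.mem_filter, Finset.mem_range, Finset.mem_singleton]
      constructor
      · rintro ⟨_, _, hstart, _⟩
        by_contra hq1
        rcases Nat.lt_or_ge q 2 with h2 | h2
        · exact hstart (Or.inl (by omega))
        · exact hstart (Or.inr ⟨h2, hd⟩)
      · rintro rfl
        refine ⟨by omega, h1D, ?_, ?_⟩
        · rintro (hc | ⟨hc, _⟩) <;> omega
        · rw [if_pos ⟨by omega, by simpa using h0D⟩, if_pos (by omega)]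
          omega
    rw [hset, Finset.card_singleton]
  · rw [if_neg hdk]
    convert Finset.card_empty
    rw [Finset.eq_empty_iff_forall_notMem]
    intro q hq
    rw [Finset.mem_filter] at hq
    obtain ⟨_, hqD, hstart, heq⟩ := hq
    have hq1 : q = 1 := by
      by_contra hq1
      rcases Nat.lt_or_ge q 2 with h2 | h2
      · exact hstart (Or.inl (by omega))
      · exact hstart (Or.inr ⟨h2, hd⟩)
    subst hq1
    rw [if_pos ⟨by omega, by simpa using h0D⟩, if_pos (by omega)] at heq
    omega

lemma cntB_desc (hσ : IsSimsun σ) (hn : 1 ≤ n) (hd : DescStart (wordOf σ)) (d : ℕ) :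
    cntB σ d = (if d = (Dset (wordOf σ)).card then (Dset (wordOf σ)).card else 0)
      + (if d = (Dset (wordOf σ)).card + 1 then n - 2 * (Dset (wordOf σ)).card else 0) := by
  classical
  rw [cntB_eq hσ hn d]
  set D := Dset (wordOf σ) with hD
  set k := D.card with hk
  have hDb : ∀ i ∈ D, i + 1 < n := hDb_fact σ
  have hDadj : ∀ i ∈ D, i + 1 ∉ D := hDadj_fact hσ
  have h0D : 0 ∈ D := descStart_iff_zero_mem.mp hd
  have h1D : 1 ∉ D := hDadj 0 h0D
  have hkpos : 1 ≤ k := Finset.card_pos.mpr ⟨0, h0D⟩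
  have hn2 : 2 ≤ n := by
    have := hd.1
    rwa [wordOf_length] at this
  set E := D.erase 0 with hE
  have hEmem : ∀ i, i ∈ E ↔ (i ∈ D ∧ i ≠ 0) := by
    intro i
    rw [hE, Finset.mem_erase]
    tauto
  have hE2 : ∀ i ∈ E, 2 ≤ i ∧ i + 1 < n := by
    intro i hi
    rw [hEmem] at hi
    have := hDb i hi.1
    have : i ≠ 1 := fun h => h1D (h ▸ hi.1)
    refine ⟨by omega, hDb i hi.1⟩
  have hcE : E.card = k - 1 := by
    rw [hE, Finset.card_erase_of_mem h0D]
  by_cases hd1 : d = k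
  · rw [if_pos hd1, if_neg (by omega)]
    have hset : (Finset.range (n+1)).filter (fun q =>
        q ∉ D ∧ (q = 0 ∨ (2 ≤ q ∧ DescStart (wordOf σ))) ∧
        d + (if 0 < q ∧ q - 1 ∈ D then 1 else 0) = k + (if q < n then 1 else 0))
        = E.image (· + 1) ∪ {n} := by
      ext q
      simp only [Finset.mem_filter, Finset.mem_range, Finset.mem_union, Finset.mem_image,
        Finset.mem_singleton]
      constructor
      · rintro ⟨hq, hqD, hstart, heq⟩
        have hq2 : 2 ≤ q := by
          rcases hstart with h | ⟨h, _⟩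
          · exact absurd (h ▸ h0D) (h ▸ hqD)
          · exact h
        by_cases hqn : q = n
        · exact Or.inr hqn
        · left
          have he : 0 < q ∧ q - 1 ∈ D := by
            by_contra hc
            rw [if_neg hc, if_pos (by omega)] at heq
            omega
          refine ⟨q - 1, ?_, by omega⟩
          rw [hEmem]
          exact ⟨he.2, by omega⟩
      · rintro (⟨j, hj, rfl⟩ | hqn)
        · obtain ⟨hj2, hjb⟩ := hE2 j hj
          rw [hEmem] at hj
          refine ⟨by omega, hDadj j hj.1, Or.inr ⟨by omega, hd⟩, ?_⟩
          rw [if_pos ⟨by omega, by simpa using hj.1⟩, if_pos (by omega)]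
          omega
        · refine ⟨by omega, fun h => by have := hDb q h; omega,
            Or.inr ⟨by omega, hd⟩, ?_⟩
          rw [if_neg (fun hc => by have := hDb _ hc.2; omega), if_neg (by omega)]
          omega
    rw [hset, Finset.card_union_of_disjoint, Finset.card_image_of_injective _
      (add_left_injective 1), Finset.card_singleton, hcE]
    · omega
    · rw [Finset.disjoint_left]
      rintro i hi hi2
      obtain ⟨j, hj, rfl⟩ := Finset.mem_image.mp hi
      rw [Finset.mem_singleton] at hi2
      have := (hE2 j hj).2
      omega
  · by_cases hd2 : d = k + 1
    · rw [if_neg hd1, if_pos hd2]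
      have hset : (Finset.range (n+1)).filter (fun q =>
          q ∉ D ∧ (q = 0 ∨ (2 ≤ q ∧ DescStart (wordOf σ))) ∧
          d + (if 0 < q ∧ q - 1 ∈ D then 1 else 0) = k + (if q < n then 1 else 0))
          = Finset.Ico 2 n \ (E ∪ E.image (· + 1)) := by
        ext q
        simp only [Finset.mem_filter, Finset.mem_range, Finset.mem_sdiff, Finset.mem_Ico,
          Finset.mem_union, Finset.mem_image]
        constructor
        · rintro ⟨hq, hqD, hstart, heq⟩
          have hq2 : 2 ≤ q := by
            rcases hstart with h | ⟨h, _⟩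
            · exact absurd (h ▸ h0D) (h ▸ hqD)
            · exact h
          have hqn : q < n := by
            by_contra hc
            by_cases he : 0 < q ∧ q - 1 ∈ D
            · rw [if_pos he, if_neg hc] at heq; omega
            · rw [if_neg he, if_neg hc] at heq; omega
          have he : ¬ (0 < q ∧ q - 1 ∈ D) := by
            intro hc
            rw [if_pos hc, if_pos hqn] at heq
            omega
          refine ⟨⟨hq2, hqn⟩, ?_⟩
          rintro (h | ⟨j, hj, rfl⟩)
          · exact hqD ((hEmem q).mp h).1
          · rw [hEmem] at hj
            exact he ⟨by omega, by simpa using hj.1⟩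
        · rintro ⟨⟨h1, h2⟩, h3⟩
          have hqD : q ∉ D := by
            intro h
            exact h3 (Or.inl ((hEmem q).mpr ⟨h, by omega⟩))
          have hqm : q - 1 ∉ D := by
            intro h
            refine h3 (Or.inr ⟨q - 1, (hEmem _).mpr ⟨h, by omega⟩, by omega⟩)
          refine ⟨by omega, hqD, Or.inr ⟨h1, hd⟩, ?_⟩
          rw [if_neg (fun hc => hqm hc.2), if_pos h2]
          omega
      rw [hset, Finset.card_sdiff_of_subset]
      · have hcU : (E ∪ E.image (· + 1)).card = 2 * (k - 1) := by
          rw [Finset.card_union_of_disjoint, Finset.card_image_of_injective _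
            (add_left_injective 1), hcE]
          · omega
          · rw [Finset.disjoint_left]
            rintro i hi hi2
            obtain ⟨j, hj, rfl⟩ := Finset.mem_image.mp hi2
            rw [hEmem] at hi hj
            exact hDadj j hj.1 hi.1
        rw [hcU, Nat.card_Ico]
        omega
      · intro i hi
        rcases Finset.mem_union.mp hi with h | h
        · obtain ⟨h2, hb⟩ := hE2 i h
          exact Finset.mem_Ico.mpr ⟨h2, by omega⟩
        · obtain ⟨j, hj, rfl⟩ := Finset.mem_image.mp h
          obtain ⟨h2, hb⟩ := hE2 j hj
          exact Finset.mem_Ico.mpr ⟨by omega, by omega⟩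
    · rw [if_neg hd1, if_neg hd2]
      convert Finset.card_empty
      rw [Finset.eq_empty_iff_forall_notMem]
      intro q hq
      rw [Finset.mem_filter] at hq
      obtain ⟨_, hqD, hstart, heq⟩ := hq
      by_cases he : 0 < q ∧ q - 1 ∈ D
      · have hf : q < n := by have := hDb _ he.2; omega
        rw [if_pos he, if_pos hf] at heq
        omega
      · rw [if_neg he] at heq
        by_cases hf : q < n
        · rw [if_pos hf] at heq; omega
        · rw [if_neg hf] at heq; omega

end Counting

open scoped Classical in
noncomputable def Acnt (m k : ℕ) : ℕ :=
  Nat.card {σ : Equiv.Perm (Fin m) // IsSimsun σ ∧ ¬ DescStart (wordOf σ) ∧ desOf σ = k}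

open scoped Classical in
noncomputable def Bcnt (m k : ℕ) : ℕ :=
  Nat.card {σ : Equiv.Perm (Fin m) // IsSimsun σ ∧ DescStart (wordOf σ) ∧ desOf σ = k}

lemma natCard_subtype {α : Type*} [Fintype α] (P : α → Prop) [DecidablePred P] :
    Nat.card {x // P x} = (Finset.univ.filter P).card := by
  rw [Nat.card_eq_fintype_card, Fintype.card_subtype]

lemma Scount_split (m k : ℕ) : Scount m k = Acnt m k + Bcnt m k := by
  classical
  rw [Scount, Acnt, Bcnt, natCard_subtype, natCard_subtype, natCard_subtype]
  rw [← Finset.card_filter_add_card_filter_not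
    (s := Finset.univ.filter (fun σ : Equiv.Perm (Fin m) => IsSimsun σ ∧ desOf σ = k))
    (p := fun σ => DescStart (wordOf σ))]
  rw [Finset.filter_filter, Finset.filter_filter, add_comm]
  congr 1
  · congr 1
    apply Finset.filter_congr
    intro σ _
    tauto
  · congr 1
    apply Finset.filter_congr
    intro σ _
    tauto

lemma Bcnt_zero (m : ℕ) : Bcnt m 0 = 0 := by
  rw [Bcnt, Nat.card_eq_zero]
  left
  refine ⟨?_⟩
  rintro ⟨σ, h1, h2, h3⟩
  have h0 : 0 ∈ Dset (wordOf σ) := descStart_iff_zero_mem.mp h2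
  have : 1 ≤ (Dset (wordOf σ)).card := Finset.card_pos.mpr ⟨0, h0⟩
  rw [desOf, desList_eq_card] at h3
  omega

lemma Bcnt_one (k : ℕ) : Bcnt 1 k = 0 := by
  rw [Bcnt, Nat.card_eq_zero]
  left
  refine ⟨?_⟩
  rintro ⟨σ, h1, h2, h3⟩
  have := h2.1
  rw [wordOf_length] at this
  omega

lemma Acnt_vanish {m k : ℕ} (hm : 1 ≤ m) (h : m < 2 * k + 1) : Acnt m k = 0 := by
  rw [Acnt, Nat.card_eq_zero]
  left
  refine ⟨?_⟩
  rintro ⟨σ, h1, h2, h3⟩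
  have := two_k_noDesc h1 hm h2
  rw [desOf, desList_eq_card] at h3
  omega

lemma cntA_natCard (σ : Equiv.Perm (Fin n)) (d : ℕ) :
    cntA σ d = Nat.card {p : Fin (n+1) // IsSimsun (ins p σ) ∧
      ¬ DescStart (wordOf (ins p σ)) ∧ desOf (ins p σ) = d} := by
  classical
  rw [natCard_subtype, cntA]

lemma cntB_natCard (σ : Equiv.Perm (Fin n)) (d : ℕ) :
    cntB σ d = Nat.card {p : Fin (n+1) // IsSimsun (ins p σ) ∧
      DescStart (wordOf (ins p σ)) ∧ desOf (ins p σ) = d} := by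
  classical
  rw [natCard_subtype, cntB]

def prodSigmaEquiv {α β : Type*} (R : α × β → Prop) :
    {x : α × β // R x} ≃ (Σ b : β, {a : α // R (a, b)}) where
  toFun := fun x => ⟨x.1.2, ⟨x.1.1, x.2⟩⟩
  invFun := fun y => ⟨(y.2.1, y.1), y.2.2⟩
  left_inv := fun x => rfl
  right_inv := fun y => rfl

lemma card_class_succ (Q : Equiv.Perm (Fin (n+1)) → Prop) :
    Nat.card {π : Equiv.Perm (Fin (n+1)) // Q π}
      = ∑ σ : Equiv.Perm (Fin n), Nat.card {p : Fin (n+1) // Q (ins p σ)} := by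
  classical
  have h1 : Nat.card {π : Equiv.Perm (Fin (n+1)) // Q π}
      = Nat.card {x : Fin (n+1) × Equiv.Perm (Fin n) // Q (ins x.1 x.2)} := by
    apply Nat.card_congr
    exact (Equiv.subtypeEquiv
      (p := fun x : Fin (n+1) × Equiv.Perm (Fin n) => Q (ins x.1 x.2)) (q := Q)
      (Equiv.ofBijective _ ins_bijective) (fun x => Iff.rfl)).symm
  rw [h1]
  rw [Nat.card_congr (prodSigmaEquiv (fun x : Fin (n+1) × Equiv.Perm (Fin n) =>
    Q (ins x.1 x.2)))]
  rw [Nat.card_eq_fintype_card, Fintype.card_sigma]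
  exact Finset.sum_congr rfl (fun σ _ => (Nat.card_eq_fintype_card).symm)

lemma sum_indicator {α : Type*} [Fintype α] (P : α → Prop) [DecidablePred P] (c : ℕ) :
    (∑ x : α, if P x then c else 0) = c * Nat.card {x // P x} := by
  classical
  rw [Finset.sum_ite, Finset.sum_const, Finset.sum_const_zero, add_zero, smul_eq_mul,
    natCard_subtype]
  ring

open scoped Classical in
lemma cntA_formula (hn : 1 ≤ n) (σ : Equiv.Perm (Fin n)) (d : ℕ) :
    cntA σ d =
      (if IsSimsun σ ∧ ¬ DescStart (wordOf σ) ∧ desOf σ = d then d + 1 else 0)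
      + (if IsSimsun σ ∧ ¬ DescStart (wordOf σ) ∧ desOf σ + 1 = d
          then n - (2 * (d - 1) + 1) else 0)
      + (if IsSimsun σ ∧ DescStart (wordOf σ) ∧ desOf σ = d then 1 else 0) := by
  by_cases hs : IsSimsun σ
  · have hdes : desOf σ = (Dset (wordOf σ)).card := by rw [desOf, desList_eq_card]
    by_cases hdsc : DescStart (wordOf σ)
    · rw [cntA_desc hs hn hdsc d, ← hdes]
      simp only [hs, hdsc, not_true_eq_false, true_and, false_and, if_false, zero_add]
      split_ifs <;> omega
    · have h2k : 2 * desOf σ + 1 ≤ n := by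
        have := two_k_noDesc hs hn hdsc
        omega
      rw [cntA_noDesc hs hn hdsc d, ← hdes]
      simp only [hs, hdsc, not_false_eq_true, true_and, false_and, if_false, add_zero]
      split_ifs <;> omega
  · have hz : cntA σ d = 0 := by
      rw [cntA]
      convert Finset.card_empty
      rw [Finset.eq_empty_iff_forall_notMem]
      intro p hp
      rw [Finset.mem_filter] at hp
      exact hs ((isSimsun_ins_iff p σ).mp hp.2.1).1
    rw [hz]
    simp only [hs, false_and, if_false]

open scoped Classical in
lemma cntB_formula (hn : 1 ≤ n) (σ : Equiv.Perm (Fin n)) (d : ℕ) :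
    cntB σ d =
      (if IsSimsun σ ∧ ¬ DescStart (wordOf σ) ∧ desOf σ + 1 = d then 1 else 0)
      + (if IsSimsun σ ∧ DescStart (wordOf σ) ∧ desOf σ = d then d else 0)
      + (if IsSimsun σ ∧ DescStart (wordOf σ) ∧ desOf σ + 1 = d
          then n - 2 * (d - 1) else 0) := by
  by_cases hs : IsSimsun σ
  · have hdes : desOf σ = (Dset (wordOf σ)).card := by rw [desOf, desList_eq_card]
    by_cases hdsc : DescStart (wordOf σ)
    · have h2k : 2 * desOf σ ≤ n := by
        have := two_k_desc hs hdsc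
        omega
      rw [cntB_desc hs hn hdsc d, ← hdes]
      simp only [hs, hdsc, not_true_eq_false, true_and, false_and, if_false, zero_add]
      split_ifs <;> omega
    · rw [cntB_noDesc hs hn hdsc d, ← hdes]
      simp only [hs, hdsc, not_false_eq_true, true_and, false_and, if_false, add_zero]
      split_ifs <;> omega
  · have hz : cntB σ d = 0 := by
      rw [cntB]
      convert Finset.card_empty
      rw [Finset.eq_empty_iff_forall_notMem]
      intro p hp
      rw [Finset.mem_filter] at hp
      exact hs ((isSimsun_ins_iff p σ).mp hp.2.1).1
    rw [hz]
    simp only [hs, false_and, if_false]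

open scoped Classical in
lemma Acnt_succ (d : ℕ) : Acnt (n+1) d = ∑ σ : Equiv.Perm (Fin n), cntA σ d := by
  rw [Acnt, card_class_succ]
  exact Finset.sum_congr rfl (fun σ _ => (cntA_natCard σ d).symm)

open scoped Classical in
lemma Bcnt_succ (d : ℕ) : Bcnt (n+1) d = ∑ σ : Equiv.Perm (Fin n), cntB σ d := by
  rw [Bcnt, card_class_succ]
  exact Finset.sum_congr rfl (fun σ _ => (cntB_natCard σ d).symm)

open scoped Classical in
lemma eqAcnt0 (j : ℕ) : Nat.card {σ : Equiv.Perm (Fin n) //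
    IsSimsun σ ∧ ¬ DescStart (wordOf σ) ∧ desOf σ = j} = Acnt n j := rfl

open scoped Classical in
lemma eqBcnt0 (j : ℕ) : Nat.card {σ : Equiv.Perm (Fin n) //
    IsSimsun σ ∧ DescStart (wordOf σ) ∧ desOf σ = j} = Bcnt n j := rfl

open scoped Classical in
lemma RA0 (hn : 1 ≤ n) : Acnt (n+1) 0 = Acnt n 0 + Bcnt n 0 := by
  rw [Acnt_succ 0, Finset.sum_congr rfl (fun σ _ => cntA_formula hn σ 0),
    Finset.sum_add_distrib, Finset.sum_add_distrib,
    sum_indicator, sum_indicator, sum_indicator]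
  have h2 : Nat.card {σ : Equiv.Perm (Fin n) //
      IsSimsun σ ∧ ¬ DescStart (wordOf σ) ∧ desOf σ + 1 = 0} = 0 := by
    rw [Nat.card_eq_zero]
    left
    exact ⟨fun ⟨σ, _, _, h⟩ => by omega⟩
  rw [h2, eqAcnt0, eqBcnt0]
  ring

open scoped Classical in
lemma eqAcntShift (j : ℕ) : Nat.card {σ : Equiv.Perm (Fin n) //
    IsSimsun σ ∧ ¬ DescStart (wordOf σ) ∧ desOf σ + 1 = j + 1} = Acnt n j := by
  rw [Acnt]
  apply Nat.card_congr
  apply Equiv.subtypeEquivRight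
  intro σ
  constructor
  · rintro ⟨a, b, c⟩; exact ⟨a, b, by omega⟩
  · rintro ⟨a, b, c⟩; exact ⟨a, b, by omega⟩

open scoped Classical in
lemma eqBcntShift (j : ℕ) : Nat.card {σ : Equiv.Perm (Fin n) //
    IsSimsun σ ∧ DescStart (wordOf σ) ∧ desOf σ + 1 = j + 1} = Bcnt n j := by
  rw [Bcnt]
  apply Nat.card_congr
  apply Equiv.subtypeEquivRight
  intro σ
  constructor
  · rintro ⟨a, b, c⟩; exact ⟨a, b, by omega⟩
  · rintro ⟨a, b, c⟩; exact ⟨a, b, by omega⟩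

open scoped Classical in
lemma RA (hn : 1 ≤ n) (j : ℕ) : Acnt (n+1) (j+1)
    = (j+2) * Acnt n (j+1) + Bcnt n (j+1) + (n - (2*j+1)) * Acnt n j := by
  rw [Acnt_succ (j+1), Finset.sum_congr rfl (fun σ _ => cntA_formula hn σ (j+1)),
    Finset.sum_add_distrib, Finset.sum_add_distrib,
    sum_indicator, sum_indicator, sum_indicator, eqAcntShift j]
  rw [show (2 * (j + 1 - 1) + 1) = 2*j+1 by omega]
  rw [eqAcnt0, eqBcnt0]
  ring

open scoped Classical in
lemma RB (hn : 1 ≤ n) (j : ℕ) : Bcnt (n+1) (j+1)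
    = Acnt n j + (j+1) * Bcnt n (j+1) + (n - 2*j) * Bcnt n j := by
  rw [Bcnt_succ (j+1), Finset.sum_congr rfl (fun σ _ => cntB_formula hn σ (j+1)),
    Finset.sum_add_distrib, Finset.sum_add_distrib,
    sum_indicator, sum_indicator, sum_indicator, eqAcntShift j, eqBcntShift j]
  rw [show (2 * (j + 1 - 1)) = 2*j by omega]
  rw [eqBcnt0]
  ring

lemma star : ∀ m, 1 ≤ m → ∀ j, (j+1) * Bcnt m (j+1) = (m - (2*j+1)) * Acnt m j := by
  intro m
  induction m with
  | zero => omega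
  | succ m IH =>
    intro _ j
    rcases Nat.eq_zero_or_pos m with rfl | hm
    · rw [Bcnt_one, mul_zero, show 0 + 1 - (2*j+1) = 0 by omega, zero_mul]
    · cases j with
      | zero =>
        rw [RB hm 0, Bcnt_zero, RA0 hm, Bcnt_zero]
        have h1 := IH hm 0
        obtain ⟨t, rfl⟩ : ∃ t, m = t + 1 := ⟨m - 1, by omega⟩
        rw [show t + 1 - (2*0+1) = t by omega] at h1
        rw [show t + 1 + 1 - (2*0+1) = t + 1 by omega]
        rw [h1]
        ring
      | succ i =>
        have hRB := RB hm (i+1)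
        have hRA := RA hm i
        have h2 := IH hm (i+1)
        have h1 := IH hm i
        rcases le_or_gt (2*i+3) m with hbig | hsmall
        · obtain ⟨t, rfl⟩ : ∃ t, m = 2*i+3+t := ⟨m - (2*i+3), by omega⟩
          rw [show 2*i+3+t - 2*(i+1) = t+1 by omega] at hRB
          rw [show 2*i+3+t - (2*i+1) = t+2 by omega] at hRA
          rw [show 2*i+3+t - (2*(i+1)+1) = t by omega] at h2
          rw [show 2*i+3+t - (2*i+1) = t+2 by omega] at h1
          rw [hRB, hRA]
          rw [show 2*i+3+t+1 - (2*(i+1)+1) = t+1 by omega]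
          zify at h1 h2 ⊢
          linear_combination ((i:ℤ)+2) * h2 + ((t:ℤ)+1) * h1
        · have hA1 : Acnt m (i+1) = 0 := Acnt_vanish hm (by omega)
          rw [show m - (2*(i+1)+1) = 0 by omega, zero_mul] at h2
          rw [hRB, hA1, show m - 2*(i+1) = 0 by omega]
          rw [show m + 1 - (2*(i+1)+1) = 0 by omega, zero_mul]
          zify at h2 ⊢
          linear_combination ((i:ℤ)+2) * h2

lemma main_A (hn : 1 ≤ n) (k : ℕ) : Acnt (n+1) k = (1+k) * Scount n k := by
  cases k with
  | zero =>
    rw [RA0 hn, Scount_split]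
    ring
  | succ j =>
    rw [RA hn j, ← star n hn j, Scount_split]
    ring

lemma main_B (hn : 1 ≤ n) (k : ℕ) : Bcnt (n+1) (k+1) = (n - 2*k) * Scount n k := by
  rw [RB hn k, star n hn k, Scount_split]
  rcases le_or_gt (2*k+1) n with hbig | hsmall
  · obtain ⟨t, rfl⟩ : ∃ t, n = 2*k+1+t := ⟨n - (2*k+1), by omega⟩
    rw [show 2*k+1+t - (2*k+1) = t by omega, show 2*k+1+t - 2*k = t+1 by omega]
    ring
  · have hA : Acnt n k = 0 := Acnt_vanish hn (by omega)
    rw [hA, show n - (2*k+1) = 0 by omega, show n - 2*k = 0 by omega]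
    simp

lemma des_eq_pk {m : ℕ} (π : Equiv.Perm (Fin m)) (hπ : IsSimsun π) :
    desOf π = pkOf π + (if DescStart (wordOf π) then 1 else 0) := by
  classical
  have hno : NoDoubleDescents (wordOf π) := noDD_word hπ
  have hP : (Finset.range (wordOf π).length).filter (fun i => 0 < i ∧
        i + 1 < (wordOf π).length ∧ (wordOf π).getD (i-1) 0 < (wordOf π).getD i 0 ∧
        (wordOf π).getD (i+1) 0 < (wordOf π).getD i 0)
      = (Dset (wordOf π)).filter (fun i => 0 < i) := by
    ext i
    simp only [Finset.mem_filter, Finset.mem_range, mem_Dset]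
    constructor
    · rintro ⟨hi, h0, h1, h2, h3⟩
      exact ⟨⟨h1, h3⟩, h0⟩
    · rintro ⟨⟨h1, h2⟩, h0⟩
      rw [wordOf_length] at h1
      refine ⟨by rw [wordOf_length]; omega, h0, by rw [wordOf_length]; omega, ?_, h2⟩
      have hi1 : i - 1 + 2 < (wordOf π).length := by rw [wordOf_length]; omega
      have hnd := hno (i-1) hi1
      rw [show i - 1 + 1 = i by omega, show i - 1 + 2 = i + 1 by omega] at hnd
      have hne := wordOf_getD_ne π (show i - 1 < m by omega) (show i < m by omega) (by omega)
      rcases Nat.lt_or_ge ((wordOf π).getD (i-1) 0) ((wordOf π).getD i 0) with h | h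
      · exact h
      · exfalso
        apply hnd
        exact ⟨by omega, h2⟩
  rw [desOf, desList_eq_card, pkOf, pkList, hP]
  rw [← Finset.card_filter_add_card_filter_not (s := Dset (wordOf π))
    (p := fun i => 0 < i)]
  have hsec : (Dset (wordOf π)).filter (fun i => ¬ 0 < i)
      = if DescStart (wordOf π) then {0} else ∅ := by
    split_ifs with h
    · ext i
      simp only [Finset.mem_filter, Finset.mem_singleton]
      constructor
      · rintro ⟨_, h2⟩; omega
      · rintro rfl
        exact ⟨descStart_iff_zero_mem.mp h, by omega⟩
    · ext i
      simp only [Finset.mem_filter, Finset.notMem_empty, iff_false]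
      rintro ⟨hi, h2⟩
      have : i = 0 := by omega
      subst this
      exact h (descStart_iff_zero_mem.mpr hi)
  rw [hsec]
  split_ifs <;> simp

lemma class_A_eq (hn : 1 ≤ n) (k : ℕ) :
    Nat.card {π : Equiv.Perm (Fin (n + 1)) // IsSimsun π ∧
        (wordOf π).getD 0 0 < (wordOf π).getD 1 0 ∧ pkOf π = k}
      = Acnt (n+1) k := by
  rw [Acnt]
  apply Nat.card_congr
  apply Equiv.subtypeEquivRight
  intro π
  constructor
  · rintro ⟨h1, h2, h3⟩
    have hnd : ¬ DescStart (wordOf π) := by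
      rintro ⟨_, hlt⟩
      omega
    have := des_eq_pk π h1
    rw [if_neg hnd] at this
    exact ⟨h1, hnd, by omega⟩
  · rintro ⟨h1, h2, h3⟩
    have hne := wordOf_getD_ne π (show 0 < n + 1 by omega) (show 1 < n + 1 by omega)
      (by omega)
    have hasc : (wordOf π).getD 0 0 < (wordOf π).getD 1 0 := by
      rcases Nat.lt_or_ge ((wordOf π).getD 0 0) ((wordOf π).getD 1 0) with h | h
      · exact h
      · exfalso
        apply h2
        refine ⟨by rw [wordOf_length]; omega, by omega⟩
    have := des_eq_pk π h1
    rw [if_neg h2] at this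
    exact ⟨h1, hasc, by omega⟩

lemma class_B_eq (hn : 1 ≤ n) (k : ℕ) :
    Nat.card {π : Equiv.Perm (Fin (n + 1)) // IsSimsun π ∧
        (wordOf π).getD 1 0 < (wordOf π).getD 0 0 ∧ pkOf π = k}
      = Bcnt (n+1) (k+1) := by
  rw [Bcnt]
  apply Nat.card_congr
  apply Equiv.subtypeEquivRight
  intro π
  constructor
  · rintro ⟨h1, h2, h3⟩
    have hd : DescStart (wordOf π) := ⟨by rw [wordOf_length]; omega, h2⟩
    have := des_eq_pk π h1
    rw [if_pos hd] at this
    exact ⟨h1, hd, by omega⟩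
  · rintro ⟨h1, h2, h3⟩
    have := des_eq_pk π h1
    rw [if_pos h2] at this
    exact ⟨h1, h2.2, by omega⟩

end Aux

/-- For `n ≥ 1`: the number of simsun permutations of `[n+1]` starting with an ascent
(`π(1) < π(2)`) having `k` interior peaks is `(1+k)·S(n,k)`, and the number starting
with a descent (`π(1) > π(2)`) having `k` interior peaks is `(n-2k)·S(n,k)`. -/
theorem stmt4 (n k : ℕ) (hn : 1 ≤ n) :
    Nat.card {π : Equiv.Perm (Fin (n + 1)) // IsSimsun π ∧
        (wordOf π).getD 0 0 < (wordOf π).getD 1 0 ∧ pkOf π = k} =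
      (1 + k) * Scount n k ∧
    Nat.card {π : Equiv.Perm (Fin (n + 1)) // IsSimsun π ∧
        (wordOf π).getD 1 0 < (wordOf π).getD 0 0 ∧ pkOf π = k} =
      (n - 2 * k) * Scount n k := by
  constructor
  · rw [class_A_eq hn k, main_A hn k]
  · rw [class_B_eq hn k, main_B hn k]
end

section
/- For every n ≥ 2, the polynomial S_n(x) has only real zeros, all lying in (-∞, 0), and they are simple. -/
open Polynomial in
/-- The descent polynomials `S_n(x)` of simsun permutations, defined by `S_0(x) = 1` and
`S_{n+1}(x) = (1 + n x)·S_n(x) + x(1 - 2x)·S_n'(x)`. -/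
noncomputable def Spoly : ℕ → Polynomial ℝ
  | 0 => 1
  | n + 1 =>
      (1 + Polynomial.C (n : ℝ) * X) * Spoly n + X * (1 - 2 * X) * (Spoly n).derivative

open Polynomial Finset

/-- Invariant: `Spoly n` is, up to a positive constant, a product of `d` distinct
negative linear roots. -/
def SInv (n d : ℕ) : Prop :=
  ∃ c : ℝ, 0 < c ∧ ∃ r : ℕ → ℝ,
    (∀ i j, i < j → j < d → r i < r j) ∧ (∀ i, i < d → r i < 0) ∧
    Spoly n = C c * ∏ i ∈ Finset.range d, (X - C (r i))

lemma Spoly_succ (n : ℕ) :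
    Spoly (n + 1) = (1 + C (n : ℝ) * X) * Spoly n + X * (1 - 2 * X) * (Spoly n).derivative :=
  rfl

lemma prod_neg_sign {α : Type*} (s : Finset α) (f : α → ℝ) (h : ∀ x ∈ s, f x < 0) :
    0 < (-1 : ℝ) ^ s.card * ∏ x ∈ s, f x := by
  have h1 : ∏ x ∈ s, f x = (-1 : ℝ) ^ s.card * ∏ x ∈ s, (-(f x)) := by
    rw [← Finset.prod_const (-1 : ℝ), ← Finset.prod_mul_distrib]
    exact Finset.prod_congr rfl fun x _ => by ring
  have h2 : 0 < ∏ x ∈ s, (-(f x)) := Finset.prod_pos fun x hx => by linarith [h x hx]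
  have h3 : ((-1 : ℝ) ^ s.card) * ((-1 : ℝ) ^ s.card) = 1 := by
    rw [← pow_add]
    exact Even.neg_one_pow ⟨s.card, rfl⟩
  calc (0:ℝ) < ((-1 : ℝ) ^ s.card * (-1 : ℝ) ^ s.card) * ∏ x ∈ s, (-(f x)) := by
        rw [h3]; simpa using h2
    _ = (-1 : ℝ) ^ s.card * ∏ x ∈ s, f x := by rw [h1]; ring

lemma exists_root_between {F : ℝ[X]} {a b : ℝ} (hab : a < b)
    (h : eval a F * eval b F < 0) : ∃ x, a < x ∧ x < b ∧ eval x F = 0 := by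
  have hc : ContinuousOn (fun x => eval x F) (Set.Icc a b) := (F.continuous).continuousOn
  rcases mul_neg_iff.mp h with ⟨ha, hb⟩ | ⟨ha, hb⟩
  · obtain ⟨x, hx, hfx⟩ := intermediate_value_Ioo' hab.le hc (Set.mem_Ioo.mpr ⟨hb, ha⟩)
    exact ⟨x, hx.1, hx.2, hfx⟩
  · obtain ⟨x, hx, hfx⟩ := intermediate_value_Ioo hab.le hc (Set.mem_Ioo.mpr ⟨ha, hb⟩)
    exact ⟨x, hx.1, hx.2, hfx⟩

lemma prod_X_sub_C_dvd_of_roots (F : ℝ[X]) (hF : F ≠ 0) (m : ℕ) (s : ℕ → ℝ)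
    (hinj : ∀ i j, i < m → j < m → s i = s j → i = j)
    (hroot : ∀ i, i < m → eval (s i) F = 0) :
    (∏ i ∈ Finset.range m, (X - C (s i))) ∣ F := by
  classical
  have h1 : Multiset.map s (Finset.range m).val ≤ F.roots := by
    rw [Multiset.le_iff_count]
    intro a
    by_cases ha : a ∈ Multiset.map s (Finset.range m).val
    · have hnodup : (Multiset.map s (Finset.range m).val).Nodup := by
        refine Multiset.Nodup.map_on ?_ (Finset.range m).nodup
        intro x hx y hy hxy
        exact hinj x y (by simpa using hx) (by simpa using hy) hxy
      have hle : Multiset.count a (Multiset.map s (Finset.range m).val) ≤ 1 :=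
        Multiset.nodup_iff_count_le_one.mp hnodup a
      have hge : 1 ≤ Multiset.count a F.roots := by
        rw [Multiset.one_le_count_iff_mem, Polynomial.mem_roots hF]
        obtain ⟨i, hi, rfl⟩ := Multiset.mem_map.mp ha
        exact hroot i (by simpa using hi)
      omega
    · rw [Multiset.count_eq_zero_of_notMem ha]; omega
  calc (∏ i ∈ Finset.range m, (X - C (s i)))
      = (Multiset.map (fun a => X - C a) (Multiset.map s (Finset.range m).val)).prod := by
        rw [Multiset.map_map, Finset.prod_eq_multiset_prod]
        rfl
    _ ∣ (Multiset.map (fun a => X - C a) F.roots).prod :=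
        Multiset.prod_dvd_prod_of_le (Multiset.map_le_map h1)
    _ ∣ F := prod_multiset_X_sub_C_dvd F

lemma rootMult_prod_le_one (s : Finset ℕ) (r : ℕ → ℝ) (x : ℝ)
    (h : ∀ i ∈ s, ∀ j ∈ s, r i = r j → i = j) :
    rootMultiplicity x (∏ i ∈ s, (X - C (r i))) ≤ 1 := by
  classical
  induction s using Finset.induction_on with
  | empty =>
    simp only [Finset.prod_empty]
    have h1 : rootMultiplicity x (C (1:ℝ)) = 0 := Polynomial.rootMultiplicity_C 1 x
    rw [map_one] at h1
    omega
  | @insert a s ha ih =>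
    have hne : ∀ (t : Finset ℕ), (∏ i ∈ t, (X - Polynomial.C (r i))) ≠ 0 := fun t =>
      (monic_prod_of_monic t _ (fun i _ => monic_X_sub_C (r i))).ne_zero
    rw [Finset.prod_insert ha, Polynomial.rootMultiplicity_mul
      (mul_ne_zero (X_sub_C_ne_zero (r a)) (hne s))]
    rw [Polynomial.rootMultiplicity_X_sub_C]
    by_cases hx : x = r a
    · have h0 : rootMultiplicity x (∏ i ∈ s, (X - C (r i))) = 0 := by
        have hnr : ¬ (∏ i ∈ s, (X - C (r i))).IsRoot x := by
          intro hr
          have hr' : ∏ i ∈ s, (x - r i) = 0 := by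
            have h5 : eval x (∏ i ∈ s, (X - C (r i))) = 0 := hr
            simpa [Polynomial.eval_prod] using h5
          obtain ⟨j, hj, hj0⟩ := Finset.prod_eq_zero_iff.mp hr'
          rw [sub_eq_zero] at hj0
          have : a = j := h a (Finset.mem_insert_self a s) j (Finset.mem_insert_of_mem hj)
            (by rw [← hx, hj0])
          exact ha (this ▸ hj)
        exact Polynomial.rootMultiplicity_eq_zero hnr
      rw [if_pos hx, h0]
    · have := ih (fun i hi j hj => h i (Finset.mem_insert_of_mem hi) j (Finset.mem_insert_of_mem hj))
      simp only [if_neg hx, zero_add]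
      exact this

set_option maxHeartbeats 1000000 in
/-- The main induction step. -/
lemma SInv_step {n d : ℕ} (hd : 1 ≤ d) (h : SInv n d) :
    (n = 2 * d → SInv (n + 1) d) ∧ (n = 2 * d + 1 → SInv (n + 1) (d + 1)) := by
  classical
  obtain ⟨c, hc, r, hmono, hneg, hf⟩ := h
  set f := Spoly n with hfdef
  set g := Spoly (n + 1) with hgdef
  have hg : g = (1 + C (n : ℝ) * X) * f + X * (1 - 2 * X) * f.derivative := Spoly_succ n
  set P : ℝ[X] := ∏ i ∈ Finset.range d, (X - C (r i)) with hP
  have hPmonic : P.Monic := monic_prod_of_monic _ _ fun i _ => monic_X_sub_C (r i)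
  have hPdeg : P.natDegree = d := by
    rw [hP, Polynomial.natDegree_prod _ _ (fun i _ => X_sub_C_ne_zero (r i))]
    simp
  have hfdeg : f.natDegree = d := by
    rw [hf, Polynomial.natDegree_C_mul hc.ne', hPdeg]
  -- coefficients of f
  have hcoefffd : f.coeff d = c := by
    rw [hf, Polynomial.coeff_C_mul, ← hPdeg, hPmonic.coeff_natDegree, mul_one]
  have hcoefffd1 : f.coeff (d + 1) = 0 :=
    Polynomial.coeff_eq_zero_of_natDegree_lt (by omega)
  -- coefficient of g at d+1
  have hC2 : (C (2:ℝ)) = (2 : ℝ[X]) := by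
    have h6 := Polynomial.C_eq_natCast (R := ℝ) 2
    norm_num at h6
    exact h6
  have hgsplit : g = f + C (n : ℝ) * (X * f) + (X * f.derivative - C 2 * (X * (X * f.derivative))) := by
    rw [hg, hC2]; ring
  have hcoeffg : g.coeff (d + 1) = ((n : ℝ) - 2 * d) * c := by
    have e1 : (X * f).coeff (d + 1) = f.coeff d := Polynomial.coeff_X_mul f d
    have e2 : (X * f.derivative).coeff (d + 1) = f.derivative.coeff d :=
      Polynomial.coeff_X_mul _ d
    have e3 : (X * (X * f.derivative)).coeff (d + 1) = (X * f.derivative).coeff d :=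
      Polynomial.coeff_X_mul _ d
    have e4 : f.derivative.coeff d = 0 := by
      rw [Polynomial.coeff_derivative, hcoefffd1, zero_mul]
    obtain ⟨e, rfl⟩ : ∃ e, d = e + 1 := ⟨d - 1, by omega⟩
    have e5 : (X * f.derivative).coeff (e + 1) = f.derivative.coeff e :=
      Polynomial.coeff_X_mul _ e
    have e6 : f.derivative.coeff e = c * (e + 1) := by
      rw [Polynomial.coeff_derivative, hcoefffd]
    rw [hgsplit]
    simp only [Polynomial.coeff_add, Polynomial.coeff_sub, Polynomial.coeff_C_mul,
      e1, e2, e3, e5, e4, e6, hcoefffd1, hcoefffd]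
    push_cast
    ring
  have hgdeg : g.natDegree ≤ d + 1 := by
    rw [hg]
    refine le_trans (Polynomial.natDegree_add_le _ _) ?_
    have h1 : ((1 + C (n : ℝ) * X) * f).natDegree ≤ d + 1 := by
      refine le_trans (Polynomial.natDegree_mul_le) ?_
      have h1a : (1 + C (n : ℝ) * X).natDegree ≤ 1 := by compute_degree
      omega
    have h2 : (X * (1 - 2 * X) * f.derivative).natDegree ≤ d + 1 := by
      refine le_trans (Polynomial.natDegree_mul_le) ?_
      have h3 : (X * (1 - 2 * X) : ℝ[X]).natDegree ≤ 2 := by compute_degree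
      have h4 : f.derivative.natDegree ≤ d - 1 := by
        have := Polynomial.natDegree_derivative_le f
        omega
      omega
    omega
  -- evaluations
  have heval_g : ∀ x : ℝ, eval x g =
      (1 + n * x) * eval x f + x * (1 - 2 * x) * eval x f.derivative := by
    intro x
    rw [hg]
    simp only [Polynomial.eval_add, Polynomial.eval_mul, Polynomial.eval_one,
      Polynomial.eval_sub, Polynomial.eval_X, Polynomial.eval_C, Polynomial.eval_ofNat]
    try ring
  have heval_f : ∀ i, i < d → eval (r i) f = 0 := by
    intro i hi
    rw [hf, hP]
    simp only [Polynomial.eval_mul, Polynomial.eval_C, Polynomial.eval_prod]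
    rw [Finset.prod_eq_zero (Finset.mem_range.mpr hi) (by simp)]
    ring
  have heval_f' : ∀ i, i < d →
      eval (r i) f.derivative = c * ∏ j ∈ (Finset.range d).erase i, (r i - r j) := by
    intro i hi
    rw [hf, Polynomial.derivative_C_mul, Polynomial.eval_mul, Polynomial.eval_C]
    congr 1
    have hPm : P = (Multiset.map (fun a => X - C a) (Multiset.map r (Finset.range d).val)).prod := by
      rw [Multiset.map_map, hP, Finset.prod_eq_multiset_prod]
      rfl
    have hmem : r i ∈ Multiset.map r (Finset.range d).val :=
      Multiset.mem_map.mpr ⟨i, by simpa using hi, rfl⟩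
    rw [hPm, Polynomial.eval_multiset_prod_X_sub_C_derivative hmem]
    have herase : (Multiset.map r (Finset.range d).val).erase (r i)
        = Multiset.map r ((Finset.range d).erase i).val := by
      have h1 : (Finset.range d).val = i ::ₘ ((Finset.range d).erase i).val := by
        rw [Finset.erase_val]
        exact (Multiset.cons_erase (by simpa using hi)).symm
      rw [h1, Multiset.map_cons, Multiset.erase_cons_head]
    rw [herase, Multiset.map_map, Finset.prod_eq_multiset_prod]
    rfl
  -- sign of g at the roots of f
  have hsign : ∀ i, i < d → 0 < (-1 : ℝ) ^ (d - i) * eval (r i) g := by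
    intro i hi
    have hQ : 0 < (-1 : ℝ) ^ (d - 1 - i) * ∏ j ∈ (Finset.range d).erase i, (r i - r j) := by
      have hsplit : (Finset.range d).erase i = Finset.range i ∪ Finset.Ico (i + 1) d := by
        ext j
        simp only [Finset.mem_erase, Finset.mem_range, Finset.mem_union, Finset.mem_Ico]
        omega
      have hdisj : Disjoint (Finset.range i) (Finset.Ico (i + 1) d) := by
        rw [Finset.disjoint_left]
        intro j hj1 hj2
        simp only [Finset.mem_range] at hj1
        simp only [Finset.mem_Ico] at hj2
        omega
      rw [hsplit, Finset.prod_union hdisj]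
      have hQ1 : 0 < ∏ j ∈ Finset.range i, (r i - r j) := by
        apply Finset.prod_pos
        intro j hj
        have := hmono j i (Finset.mem_range.mp hj) hi
        linarith
      have hQ2 : 0 < (-1 : ℝ) ^ (Finset.Ico (i + 1) d).card * ∏ j ∈ Finset.Ico (i + 1) d, (r i - r j) := by
        apply prod_neg_sign
        intro j hj
        rw [Finset.mem_Ico] at hj
        have := hmono i j (by omega) hj.2
        linarith
      have hcard : (Finset.Ico (i + 1) d).card = d - 1 - i := by
        rw [Nat.card_Ico]; omega
      rw [hcard] at hQ2
      calc (0:ℝ) < (∏ j ∈ Finset.range i, (r i - r j)) *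
            ((-1 : ℝ) ^ (d - 1 - i) * ∏ j ∈ Finset.Ico (i + 1) d, (r i - r j)) :=
            mul_pos hQ1 hQ2
        _ = (-1 : ℝ) ^ (d - 1 - i) *
            ((∏ j ∈ Finset.range i, (r i - r j)) * ∏ j ∈ Finset.Ico (i + 1) d, (r i - r j)) := by
            ring
    have hev : eval (r i) g = r i * (1 - 2 * r i) *
        (c * ∏ j ∈ (Finset.range d).erase i, (r i - r j)) := by
      rw [heval_g, heval_f i hi, heval_f' i hi]
      ring
    have hpow : (-1 : ℝ) ^ (d - i) = (-1 : ℝ) ^ (d - 1 - i) * (-1) := by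
      rw [← pow_succ]
      congr 1
      omega
    rw [hev, hpow]
    have h1 : (0:ℝ) < -r i := by linarith [hneg i hi]
    have h2 : (0:ℝ) < 1 - 2 * r i := by linarith [hneg i hi]
    calc (0:ℝ) < ((-r i) * (1 - 2 * r i) * c) *
          ((-1 : ℝ) ^ (d - 1 - i) * ∏ j ∈ (Finset.range d).erase i, (r i - r j)) :=
          mul_pos (mul_pos (mul_pos h1 h2) hc) hQ
      _ = (-1 : ℝ) ^ (d - 1 - i) * (-1) *
          (r i * (1 - 2 * r i) * (c * ∏ j ∈ (Finset.range d).erase i, (r i - r j))) := by ring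
  -- g(0) > 0
  have heval0 : 0 < eval 0 g := by
    have h0f : 0 < eval 0 f := by
      rw [hf, hP]
      simp only [Polynomial.eval_mul, Polynomial.eval_C, Polynomial.eval_prod,
        Polynomial.eval_sub, Polynomial.eval_X]
      apply mul_pos hc
      apply Finset.prod_pos
      intro i hi
      have := hneg i (Finset.mem_range.mp hi)
      linarith
    rw [heval_g 0]
    simpa using h0f
  have hgne : g ≠ 0 := by
    intro h0
    rw [h0] at heval0
    simp at heval0
  -- gap roots
  have hgap : ∀ i, i < d → ∃ x, r i < x ∧ x < (if i + 1 < d then r (i + 1) else 0) ∧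
      eval x g = 0 := by
    intro i hi
    by_cases h1 : i + 1 < d
    · have hA := hsign i hi
      have hB := hsign (i + 1) h1
      have hpow : (-1 : ℝ) ^ (d - i) = (-1 : ℝ) ^ (d - (i + 1)) * (-1) := by
        rw [← pow_succ]
        congr 1
        omega
      have hsq : ((-1 : ℝ) ^ (d - (i + 1))) * ((-1 : ℝ) ^ (d - (i + 1))) = 1 := by
        rw [← pow_add]
        exact Even.neg_one_pow ⟨d - (i + 1), rfl⟩
      have hprod : eval (r i) g * eval (r (i + 1)) g < 0 := by
        have := mul_pos hA hB
        rw [hpow] at this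
        nlinarith [this, hsq]
      obtain ⟨x, hx1, hx2, hx3⟩ := exists_root_between (hmono i (i + 1) (by omega) h1) hprod
      exact ⟨x, hx1, by rw [if_pos h1]; exact hx2, hx3⟩
    · have hA := hsign i hi
      have hd1 : d - i = 1 := by omega
      rw [hd1, pow_one] at hA
      have hprod : eval (r i) g * eval 0 g < 0 := by nlinarith
      obtain ⟨x, hx1, hx2, hx3⟩ := exists_root_between (hneg i hi) hprod
      exact ⟨x, hx1, by rw [if_neg h1]; exact hx2, hx3⟩
  set s : ℕ → ℝ := fun i => if h : i < d then (hgap i h).choose else 0 with hsdef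
  have hs : ∀ i, i < d → r i < s i ∧ s i < 0 ∧ eval (s i) g = 0 ∧
      (i + 1 < d → s i < r (i + 1)) := by
    intro i hi
    have hspec := (hgap i hi).choose_spec
    have hsi : s i = (hgap i hi).choose := by rw [hsdef]; simp [hi]
    rw [← hsi] at hspec
    obtain ⟨h1, h2, h3⟩ := hspec
    by_cases h4 : i + 1 < d
    · rw [if_pos h4] at h2
      exact ⟨h1, lt_trans h2 (hneg _ h4), h3, fun _ => h2⟩
    · rw [if_neg h4] at h2
      exact ⟨h1, h2, h3, fun h => absurd h h4⟩
  have hsmono : ∀ i j, i < j → j < d → s i < s j := by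
    intro i j hij hj
    have hi : i < d := by omega
    have h1 : s i < r (i + 1) := (hs i hi).2.2.2 (by omega)
    have h2 : r (i + 1) ≤ r j := by
      rcases eq_or_lt_of_le (show i + 1 ≤ j by omega) with h | h
      · rw [h]
      · exact le_of_lt (hmono (i + 1) j h hj)
    have h3 : r j < s j := (hs j hj).1
    linarith
  have hsneg : ∀ i, i < d → s i < 0 := fun i hi => (hs i hi).2.1
  have hsroot : ∀ i, i < d → eval (s i) g = 0 := fun i hi => (hs i hi).2.2.1
  have hsinj : ∀ i j, i < d → j < d → s i = s j → i = j := by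
    intro i j hi hj hij
    by_contra hne
    rcases Nat.lt_or_ge i j with h | h
    · have := hsmono i j h hj; linarith
    · have hji : j < i := by omega
      have := hsmono j i hji hi; linarith
  obtain ⟨q, hq⟩ := prod_X_sub_C_dvd_of_roots g hgne d s hsinj hsroot
  have hqne : q ≠ 0 := by
    intro h0
    rw [h0, mul_zero] at hq
    exact hgne hq
  set P' : ℝ[X] := ∏ i ∈ Finset.range d, (X - C (s i)) with hP'
  have hP'monic : P'.Monic := monic_prod_of_monic _ _ fun i _ => monic_X_sub_C (s i)
  have hP'deg : P'.natDegree = d := by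
    rw [hP', Polynomial.natDegree_prod _ _ (fun i _ => X_sub_C_ne_zero (s i))]
    simp
  have hdegq : g.natDegree = d + q.natDegree := by
    rw [hq, Polynomial.natDegree_mul hP'monic.ne_zero hqne, hP'deg]
  constructor
  · -- even case : n = 2d
    intro hn
    have hc1 : g.coeff (d + 1) = 0 := by
      rw [hcoeffg, hn]
      push_cast
      ring
    have hdle : g.natDegree ≤ d := by
      rw [Polynomial.natDegree_le_iff_coeff_eq_zero]
      intro N hN
      rcases eq_or_lt_of_le (show d + 1 ≤ N by omega) with h | h
      · rw [← h]; exact hc1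
      · exact Polynomial.coeff_eq_zero_of_natDegree_lt (by omega)
    have hqdeg : q.natDegree = 0 := by omega
    have hqC : q = C (q.coeff 0) := Polynomial.eq_C_of_natDegree_eq_zero hqdeg
    set a := q.coeff 0 with ha
    have hga : g = C a * P' := by rw [hq, hqC]; ring
    have hapos : 0 < a := by
      have he0 : eval 0 g = a * ∏ i ∈ Finset.range d, (0 - s i) := by
        rw [hga, hP']
        simp [Polynomial.eval_prod]
      have hprodpos : 0 < ∏ i ∈ Finset.range d, (0 - s i) := by
        apply Finset.prod_pos
        intro i hi
        have := hsneg i (Finset.mem_range.mp hi)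
        linarith
      rw [he0] at heval0
      nlinarith
    exact ⟨a, hapos, s, hsmono, hsneg, hga⟩
  · -- odd case : n = 2d + 1
    intro hn
    have hc1 : g.coeff (d + 1) = c := by
      rw [hcoeffg, hn]
      push_cast
      ring
    have hdegg : g.natDegree = d + 1 := by
      have h1 : d + 1 ≤ g.natDegree :=
        Polynomial.le_natDegree_of_ne_zero (by rw [hc1]; exact hc.ne')
      omega
    have hqdeg : q.natDegree = 1 := by omega
    have hq1 : q.coeff 1 ≠ 0 := by
      have : q.coeff 1 = q.leadingCoeff := by rw [Polynomial.leadingCoeff, hqdeg]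
      rw [this]
      exact Polynomial.leadingCoeff_ne_zero.mpr hqne
    set t : ℝ := -(q.coeff 0) / q.coeff 1 with ht
    have hqfact : q = C (q.coeff 1) * (X - C t) := by
      have h1 : q = C (q.coeff 1) * X + C (q.coeff 0) :=
        Polynomial.eq_X_add_C_of_natDegree_le_one (by omega)
      conv_lhs => rw [h1]
      have h2 : q.coeff 1 * t = -(q.coeff 0) := by
        rw [ht]
        field_simp
        try ring
      rw [mul_sub, ← Polynomial.C_mul, h2, map_neg, sub_neg_eq_add]
    have hgfact : g = C (q.coeff 1) * ((X - C t) * P') := by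
      conv_lhs => rw [hq, hqfact]
      ring
    -- q.coeff 1 = c
    have hq1c : q.coeff 1 = c := by
      have hm : ((X - C t) * P').Monic := (monic_X_sub_C t).mul hP'monic
      have hmdeg : ((X - C t) * P').natDegree = d + 1 := by
        rw [Polynomial.natDegree_mul (X_sub_C_ne_zero t) hP'monic.ne_zero,
          Polynomial.natDegree_X_sub_C, hP'deg]
        omega
      have : g.coeff (d + 1) = q.coeff 1 * ((X - C t) * P').coeff (d + 1) := by
        rw [hgfact, Polynomial.coeff_C_mul]
      rw [hc1, ← hmdeg] at this
      rw [hm.coeff_natDegree, mul_one] at this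
      exact this.symm
    have hq1pos : 0 < q.coeff 1 := by rw [hq1c]; exact hc
    -- t < r 0
    have htlt : t < r 0 := by
      have hsign0 := hsign 0 hd
      rw [Nat.sub_zero] at hsign0
      have hW : 0 < (-1 : ℝ) ^ d * ∏ i ∈ Finset.range d, (r 0 - s i) := by
        have := prod_neg_sign (Finset.range d) (fun i => r 0 - s i) ?_
        · simpa using this
        · intro i hi
          have hi' : i < d := Finset.mem_range.mp hi
          have h1 : r 0 ≤ r i := by
            rcases Nat.eq_or_lt_of_le (Nat.zero_le i) with h | h
            · rw [← h]
            · exact le_of_lt (hmono 0 i h hi')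
          have h2 := (hs i hi').1
          show r 0 - s i < 0
          linarith
      have hev : eval (r 0) g =
          (q.coeff 1 * (r 0 - t)) * ∏ i ∈ Finset.range d, (r 0 - s i) := by
        rw [hgfact, hP']
        simp only [Polynomial.eval_mul, Polynomial.eval_C, Polynomial.eval_prod,
          Polynomial.eval_sub, Polynomial.eval_X]
        ring
      rw [hev] at hsign0
      have hkey : 0 < q.coeff 1 * (r 0 - t) := by
        by_contra hle
        push_neg at hle
        have h7 : (q.coeff 1 * (r 0 - t)) *
            ((-1 : ℝ) ^ d * ∏ i ∈ Finset.range d, (r 0 - s i)) ≤ 0 :=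
          mul_nonpos_iff.mpr (Or.inr ⟨hle, hW.le⟩)
        have h8 : 0 < ((-1 : ℝ) ^ d) *
            ((q.coeff 1 * (r 0 - t)) * ∏ i ∈ Finset.range d, (r 0 - s i)) := hsign0
        nlinarith [h7, h8]
      have h9 : 0 < r 0 - t := by
        rcases lt_trichotomy (r 0 - t) 0 with h | h | h
        · exfalso; nlinarith [hkey, hq1pos]
        · exfalso; rw [h] at hkey; simp at hkey
        · exact h
      linarith
    have htneg : t < 0 := lt_trans htlt (hneg 0 hd)
    -- assemble
    obtain ⟨s', hs'0, hs'succ⟩ : ∃ s' : ℕ → ℝ, s' 0 = t ∧ ∀ i, s' (i + 1) = s i :=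
      ⟨fun i => if i = 0 then t else s (i - 1), rfl, fun i => by simp⟩
    have hs'mono : ∀ i j, i < j → j < d + 1 → s' i < s' j := by
      intro i j hij hj
      rcases Nat.eq_zero_or_pos i with h0 | h0
      · subst h0
        obtain ⟨j', rfl⟩ : ∃ j', j = j' + 1 := ⟨j - 1, by omega⟩
        rw [hs'0, hs'succ]
        have hj' : j' < d := by omega
        have h1 : r 0 ≤ r j' := by
          rcases Nat.eq_or_lt_of_le (Nat.zero_le j') with h | h
          · rw [← h]
          · exact le_of_lt (hmono 0 j' h hj')
        have h2 := (hs j' hj').1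
        linarith
      · obtain ⟨i', rfl⟩ : ∃ i', i = i' + 1 := ⟨i - 1, by omega⟩
        obtain ⟨j', rfl⟩ : ∃ j', j = j' + 1 := ⟨j - 1, by omega⟩
        rw [hs'succ, hs'succ]
        exact hsmono i' j' (by omega) (by omega)
    have hs'neg : ∀ i, i < d + 1 → s' i < 0 := by
      intro i hi
      rcases Nat.eq_zero_or_pos i with h0 | h0
      · subst h0; rw [hs'0]; exact htneg
      · obtain ⟨i', rfl⟩ : ∃ i', i = i' + 1 := ⟨i - 1, by omega⟩
        rw [hs'succ]
        exact hsneg i' (by omega)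
    have hg' : g = C (q.coeff 1) * ∏ i ∈ Finset.range (d + 1), (X - C (s' i)) := by
      rw [Finset.prod_range_succ' (fun i => X - C (s' i)) d]
      have : ∀ i ∈ Finset.range d, (X - C (s' (i + 1))) = (X - C (s i)) := by
        intro i _
        rw [hs'succ]
      rw [Finset.prod_congr rfl this, hs'0, hgfact]
      ring
    exact ⟨q.coeff 1, hq1pos, s', hs'mono, hs'neg, hg'⟩

lemma SInv_two : SInv 2 1 := by
  have h0 : Spoly 0 = 1 := rfl
  have h1 : Spoly 1 = 1 := by
    rw [Spoly_succ, h0]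
    simp
  have h2 : Spoly 2 = 1 + X := by
    rw [Spoly_succ, h1]
    simp
  refine ⟨1, one_pos, fun _ => -1, ?_, ?_, ?_⟩
  · intro i j hij hj; omega
  · intro i hi; norm_num
  · rw [h2]
    simp [Finset.prod_range_one]
    ring

lemma SInv_main (n : ℕ) (hn : 2 ≤ n) : SInv n (n / 2) := by
  induction n, hn using Nat.le_induction with
  | base => exact SInv_two
  | succ n hn ih =>
    have hd : 1 ≤ n / 2 := by omega
    rcases Nat.even_or_odd n with ⟨k, hk⟩ | ⟨k, hk⟩
    · have h1 : n / 2 = k := by omega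
      have h2 : (n + 1) / 2 = k := by omega
      rw [h2]
      rw [h1] at ih hd
      exact (SInv_step hd ih).1 (by omega)
    · have h1 : n / 2 = k := by omega
      have h2 : (n + 1) / 2 = k + 1 := by omega
      rw [h2]
      rw [h1] at ih hd
      exact (SInv_step hd ih).2 (by omega)

/-- For every `n ≥ 2`, the polynomial `S_n(x)` has only real zeros, all lying in
`(-∞, 0)`, and they are all simple. -/
theorem stmt8 (n : ℕ) (hn : 2 ≤ n) :
    (∀ z : ℂ, Polynomial.aeval z (Spoly n) = 0 → ∃ r : ℝ, r < 0 ∧ z = (r : ℂ)) ∧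
    (∀ r : ℝ, (Spoly n).rootMultiplicity r ≤ 1) := by
  obtain ⟨c, hc, r, hmono, hneg, hf⟩ := SInv_main n hn
  constructor
  · intro z hz
    rw [hf] at hz
    simp only [map_mul, Polynomial.aeval_C, map_prod, map_sub, Polynomial.aeval_X,
      mul_eq_zero] at hz
    rcases hz with h | h
    · exact absurd h (by simp [hc.ne'])
    · rw [Finset.prod_eq_zero_iff] at h
      obtain ⟨i, hi, hi0⟩ := h
      have hz : z = ((r i : ℝ) : ℂ) := by
        have : z - (algebraMap ℝ ℂ) (r i) = 0 := hi0
        simp only [sub_eq_zero] at this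
        simpa using this
      exact ⟨r i, hneg i (Finset.mem_range.mp hi), hz⟩
  · intro x
    rw [hf]
    classical
    have hprodne : (∏ i ∈ Finset.range (n / 2), (X - Polynomial.C (r i))) ≠ 0 :=
      (monic_prod_of_monic _ _ (fun i _ => monic_X_sub_C (r i))).ne_zero
    rw [Polynomial.rootMultiplicity_mul
      (mul_ne_zero (by simp [hc.ne'] : (Polynomial.C c : ℝ[X]) ≠ 0) hprodne)]
    rw [Polynomial.rootMultiplicity_C]
    have hinj : ∀ i ∈ Finset.range (n / 2), ∀ j ∈ Finset.range (n / 2), r i = r j → i = j := by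
      intro i hi j hj hij
      by_contra hne
      rcases Nat.lt_or_ge i j with h | h
      · have := hmono i j h (Finset.mem_range.mp hj); linarith
      · have := hmono j i (by omega) (Finset.mem_range.mp hi); linarith
    simpa using rootMult_prod_le_one (Finset.range (n / 2)) r x hinj
end

section
/- For every n ≥ 2, the polynomial P_{n+1}(x) := (n+1)·S_n(x) - x·S_n'(x) has only real zeros, all in (-∞,0), and the zeros of P_{n+1} and S_n interlace with P_{n+1} alternating left of S_n (i.e., between consecutive zeros of S_n there is exactly one zero of P_{n+1}, plus one additional zero of P_{n+1} below the smallest zero of S_n). -/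
open Polynomial in
/-- `P_{n+1}(x) = (n+1)·S_n(x) - x·S_n'(x)`, the interior-peak polynomial of simsun
permutations of `[n+1]`. -/
noncomputable def Ppoly (n : ℕ) : Polynomial ℝ :=
  Polynomial.C ((n : ℝ) + 1) * Spoly n - X * (Spoly n).derivative

open Polynomial Finset

open Polynomial Finset

-- IVT helper
lemma ivt_root (q : Polynomial ℝ) {a b : ℝ} (hab : a < b)
    (hs : q.eval a * q.eval b < 0) : ∃ c, a < c ∧ c < b ∧ q.eval c = 0 := by
  have hcont : ContinuousOn (fun x => q.eval x) (Set.Icc a b) := q.continuous.continuousOn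
  rcases lt_trichotomy (q.eval a) 0 with h | h | h
  · have hb : 0 < q.eval b := by nlinarith
    obtain ⟨c, hc, hc0⟩ := intermediate_value_Ioo hab.le hcont (Set.mem_Ioo.2 ⟨h, hb⟩)
    exact ⟨c, hc.1, hc.2, hc0⟩
  · simp [h] at hs
  · have hb : q.eval b < 0 := by nlinarith
    obtain ⟨c, hc, hc0⟩ := intermediate_value_Ioo' hab.le hcont (Set.mem_Ioo.2 ⟨hb, h⟩)
    exact ⟨c, hc.1, hc.2, hc0⟩

lemma t_mono {t : ℕ → ℝ} {k : ℕ} (h : ∀ i, i + 1 ≤ k → t i < t (i + 1)) :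
    ∀ a b, a ≤ b → b ≤ k → t a ≤ t b := by
  intro a b hab
  induction b, hab using Nat.le_induction with
  | base => intro _; exact le_rfl
  | succ b hab ih => intro hbk; exact le_trans (ih (by omega)) (le_of_lt (h b (by omega)))

-- Lemma A': root counting from sign changes
lemma roots_of_sign_changes (q : Polynomial ℝ) (k : ℕ) (hq : q ≠ 0) (hdeg : q.natDegree ≤ k)
    (t : ℕ → ℝ) (hmono : ∀ i, i + 1 ≤ k → t i < t (i + 1))
    (hsign : ∀ i, i + 1 ≤ k → q.eval (t i) * q.eval (t (i + 1)) < 0) :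
    ∃ ξ : Fin k → ℝ, StrictMono ξ ∧ (∀ i : Fin k, t i.val < ξ i ∧ ξ i < t (i.val + 1)) ∧
      q.roots = Multiset.map ξ Finset.univ.val ∧ q.natDegree = k := by
  have h : ∀ i : Fin k, ∃ c, t i.val < c ∧ c < t (i.val + 1) ∧ q.eval c = 0 := by
    intro i
    exact ivt_root q (hmono i.val i.isLt) (hsign i.val i.isLt)
  choose ξ h1 h2 h3 using h
  have tm := t_mono hmono
  have hξmono : StrictMono ξ := by
    intro i j hij
    calc ξ i < t (i.val + 1) := h2 i
    _ ≤ t j.val := tm _ _ (by omega) (by omega)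
    _ < ξ j := h1 j
  have hnodup : Multiset.Nodup (Multiset.map ξ Finset.univ.val) :=
    Multiset.Nodup.map hξmono.injective Finset.univ.nodup
  have hsub : Multiset.map ξ Finset.univ.val ≤ q.roots := by
    rw [Multiset.le_iff_subset hnodup]
    intro x hx
    obtain ⟨i, _, rfl⟩ := Multiset.mem_map.1 hx
    rw [Polynomial.mem_roots hq]
    exact h3 i
  have hcard : Multiset.card q.roots ≤ k := le_trans q.card_roots' hdeg
  have hcard2 : Multiset.card (Multiset.map ξ Finset.univ.val) = k := by simp
  have heq := Multiset.eq_of_le_of_card_le hsub (by omega)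
  refine ⟨ξ, hξmono, fun i => ⟨h1 i, h2 i⟩, heq.symm, ?_⟩
  have : k ≤ Multiset.card q.roots := by rw [← heq, hcard2]
  have := q.card_roots' 
  omega

-- sign at -infinity
lemma exists_left_point (q : Polynomial ℝ) (hq : 0 < q.leadingCoeff) (hd : q.natDegree ≠ 0)
    (c : ℝ) : ∃ t, t < c ∧ 0 < (-1 : ℝ) ^ q.natDegree * q.eval t := by
  set d := q.natDegree with hdd
  set r : Polynomial ℝ := C ((-1 : ℝ) ^ d) * q.comp (-X) with hr
  have hq0 : q ≠ 0 := fun h => by simp [h] at hq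
  have hnX : (-X : Polynomial ℝ).natDegree = 1 := by rw [natDegree_neg, natDegree_X]
  have hcompdeg : (q.comp (-X)).natDegree = d := by rw [natDegree_comp, hnX, mul_one]
  have hrdeg : r.natDegree = d := by
    rw [hr, natDegree_C_mul (by positivity), hcompdeg]
  have hrlead : 0 < r.leadingCoeff := by
    rw [hr, leadingCoeff_mul, leadingCoeff_C, leadingCoeff_comp (by rw [hnX]; omega),
      leadingCoeff_neg, leadingCoeff_X]
    have : ((-1 : ℝ) ^ d) * ((-1) ^ d) = 1 := by
      rw [← pow_add]; exact Even.neg_one_pow ⟨d, rfl⟩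
    nlinarith [hq]
  have htend : Filter.Tendsto (fun x => r.eval x) Filter.atTop Filter.atTop := by
    apply Polynomial.tendsto_atTop_of_leadingCoeff_nonneg
    · rw [← natDegree_pos_iff_degree_pos, hrdeg]; omega
    · exact hrlead.le
  have hev : ∀ᶠ x in Filter.atTop, 0 < r.eval x ∧ (-c) < x :=
    (htend.eventually_gt_atTop 0).and (Filter.eventually_gt_atTop (-c))
  obtain ⟨x, hx1, hx2⟩ := hev.exists
  refine ⟨-x, by linarith, ?_⟩
  have : r.eval x = (-1 : ℝ) ^ d * q.eval (-x) := by
    rw [hr, eval_mul, eval_C, eval_comp, eval_neg, eval_X]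
  rw [← this]; exact hx1

lemma mul_neg_of_signs {e : ℕ} {x y : ℝ} (h1 : 0 < (-1 : ℝ) ^ (e + 1) * x)
    (h2 : 0 < (-1 : ℝ) ^ e * y) : x * y < 0 := by
  have := mul_pos h1 h2
  have hsq : ((-1 : ℝ) ^ e) * ((-1 : ℝ) ^ e) = 1 := by
    rw [← pow_add]; exact Even.neg_one_pow ⟨e, rfl⟩
  rw [pow_succ] at this
  nlinarith


-- sign of derivative at the i-th root
lemma deriv_sign {m : ℕ} {p : Polynomial ℝ} {θ : Fin m → ℝ} (hmono : StrictMono θ)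
    (hdeg : p.natDegree = m) (hlead : 0 < p.leadingCoeff)
    (hroots : p.roots = Multiset.map θ Finset.univ.val) (i : Fin m) :
    0 < (-1 : ℝ) ^ (m - 1 - i.val) * (Polynomial.derivative p).eval (θ i) := by
  classical
  have hcard : Multiset.card p.roots = p.natDegree := by rw [hroots, hdeg]; simp
  have hfac := Polynomial.C_leadingCoeff_mul_prod_multiset_X_sub_C (p := p) hcard
  have hmem : θ i ∈ p.roots := by
    rw [hroots, Multiset.mem_map]; exact ⟨i, by simp, rfl⟩
  have hev : (Polynomial.derivative p).eval (θ i) =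
      p.leadingCoeff * ((p.roots.erase (θ i)).map (fun a => θ i - a)).prod := by
    conv_lhs => rw [← hfac]
    rw [derivative_C_mul, eval_mul, eval_C, eval_multiset_prod_X_sub_C_derivative hmem]
  have herase : p.roots.erase (θ i) = Multiset.map θ ((Finset.univ.erase i).val) := by
    rw [hroots, Finset.erase_val, Multiset.map_erase θ hmono.injective]
  have hprod : ((p.roots.erase (θ i)).map (fun a => θ i - a)).prod =
      ∏ j ∈ Finset.univ.erase i, (θ i - θ j) := by
    rw [herase, Multiset.map_map]
    rfl
  have hU : Finset.univ.erase i = Finset.Iio i ∪ Finset.Ioi i := by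
    ext j
    simp only [Finset.mem_erase, Finset.mem_union, Finset.mem_Iio, Finset.mem_Ioi,
      Finset.mem_univ, and_true, Fin.lt_def, ne_eq, Fin.ext_iff]
    omega
  have hdisj : Disjoint (Finset.Iio i) (Finset.Ioi i) :=
    Finset.disjoint_left.2 fun j hj hj' =>
      lt_asymm (Finset.mem_Iio.1 hj) (Finset.mem_Ioi.1 hj')
  have hsplit : ∏ j ∈ Finset.univ.erase i, (θ i - θ j) =
      (∏ j ∈ Finset.Iio i, (θ i - θ j)) * ∏ j ∈ Finset.Ioi i, (θ i - θ j) := by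
    rw [hU, Finset.prod_union hdisj]
  have hIoi : ∏ j ∈ Finset.Ioi i, (θ i - θ j) =
      (-1 : ℝ) ^ (m - 1 - i.val) * ∏ j ∈ Finset.Ioi i, (θ j - θ i) := by
    calc ∏ j ∈ Finset.Ioi i, (θ i - θ j) = ∏ j ∈ Finset.Ioi i, (-1) * (θ j - θ i) :=
          Finset.prod_congr rfl (fun j _ => by ring)
    _ = (∏ _j ∈ Finset.Ioi i, (-1 : ℝ)) * ∏ j ∈ Finset.Ioi i, (θ j - θ i) :=
          Finset.prod_mul_distrib
    _ = (-1 : ℝ) ^ (m - 1 - i.val) * ∏ j ∈ Finset.Ioi i, (θ j - θ i) := by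
          rw [Finset.prod_const, Fin.card_Ioi]
  have hA : 0 < ∏ j ∈ Finset.Iio i, (θ i - θ j) :=
    Finset.prod_pos fun j hj => by
      have := hmono (Finset.mem_Iio.1 hj); linarith
  have hB : 0 < ∏ j ∈ Finset.Ioi i, (θ j - θ i) :=
    Finset.prod_pos fun j hj => by
      have := hmono (Finset.mem_Ioi.1 hj); linarith
  rw [hev, hprod, hsplit, hIoi]
  have hsq : ((-1 : ℝ) ^ (m - 1 - i.val)) * ((-1 : ℝ) ^ (m - 1 - i.val)) = 1 := by
    rw [← pow_add]; exact Even.neg_one_pow ⟨m - 1 - i.val, rfl⟩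
  calc (0:ℝ) < p.leadingCoeff * ((∏ j ∈ Finset.Iio i, (θ i - θ j)) *
        (∏ j ∈ Finset.Ioi i, (θ j - θ i))) := by positivity
  _ = (-1 : ℝ) ^ (m - 1 - i.val) * (p.leadingCoeff *
        ((∏ j ∈ Finset.Iio i, (θ i - θ j)) *
          ((-1 : ℝ) ^ (m - 1 - i.val) * ∏ j ∈ Finset.Ioi i, (θ j - θ i)))) := by
      rw [show ∀ a b c d : ℝ, d * (a * (b * (d * c))) = (d * d) * (a * (b * c)) from
        fun a b c d => by ring, hsq, one_mul]

lemma lead_pos_of (q : Polynomial ℝ) (hq1 : q.eval 0 = 1) {k : ℕ} (ξ : Fin k → ℝ)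
    (hneg : ∀ i, ξ i < 0) (hroots : q.roots = Multiset.map ξ Finset.univ.val)
    (hdeg : q.natDegree = k) : 0 < q.leadingCoeff := by
  have hcard : Multiset.card q.roots = q.natDegree := by rw [hroots, hdeg]; simp
  have hfac := Polynomial.C_leadingCoeff_mul_prod_multiset_X_sub_C (p := q) hcard
  have hev : (1:ℝ) = q.leadingCoeff * ∏ j : Fin k, (0 - ξ j) := by
    conv_lhs => rw [← hq1, ← hfac]
    rw [eval_mul, eval_C, eval_multiset_prod, hroots, Multiset.map_map, Multiset.map_map]
    simp only [Function.comp, eval_sub, eval_X, eval_C]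
    rfl
  have hpos : 0 < ∏ j : Fin k, (0 - ξ j) :=
    Finset.prod_pos fun j _ => by have := hneg j; linarith
  nlinarith

lemma Spoly_eval_zero (n : ℕ) : (Spoly n).eval 0 = 1 := by
  induction n with
  | zero => simp [Spoly]
  | succ n ih => simp [Spoly, ih]

lemma Spoly_ne_zero (n : ℕ) : Spoly n ≠ 0 := fun h => by
  have := Spoly_eval_zero n; rw [h] at this; simp at this

lemma coeff_step_top (S : Polynomial ℝ) (c : ℝ) (m' : ℕ) (hdeg : S.natDegree = m' + 1) :
    ((1 + C c * X) * S + X * (1 - 2 * X) * S.derivative).coeff (m' + 2) =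
      (c - 2 * (m' + 1)) * S.coeff (m' + 1) := by
  have h1 : S.coeff (m' + 2) = 0 := coeff_eq_zero_of_natDegree_lt (by omega)
  have e : (1 + C c * X) * S + X * (1 - 2 * X) * S.derivative =
      S + C c * (X * S) + (X * S.derivative - 2 * (X * (X * S.derivative))) := by ring
  have h2 : S.coeff (m' + 1 + 1) = 0 := coeff_eq_zero_of_natDegree_lt (by omega)
  rw [e]
  rw [show m' + 2 = (m' + 1) + 1 from rfl]
  simp only [coeff_add, coeff_sub, coeff_C_mul, coeff_ofNat_mul, coeff_X_mul, coeff_derivative, h1, h2]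
  push_cast
  ring

lemma deg_step_le (S : Polynomial ℝ) (c : ℝ) (m' : ℕ) (hdeg : S.natDegree ≤ m' + 1) :
    ((1 + C c * X) * S + X * (1 - 2 * X) * S.derivative).natDegree ≤ m' + 2 := by
  refine le_trans (natDegree_add_le _ _) (max_le ?_ ?_)
  · refine le_trans (natDegree_mul_le) ?_
    have h1 : (1 + C c * X).natDegree ≤ 1 := by compute_degree
    omega
  · refine le_trans (natDegree_mul_le) ?_
    have h1 : (X * (1 - 2 * X) : Polynomial ℝ).natDegree ≤ 2 := by compute_degree
    have h2 : S.derivative.natDegree ≤ m' := le_trans (natDegree_derivative_le S) (by omega)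
    omega

lemma Ppoly_coeff_top (n : ℕ) (m' : ℕ) (hdeg : (Spoly n).natDegree = m' + 1) :
    (Ppoly n).coeff (m' + 1) = ((n : ℝ) + 1 - (m' + 1)) * (Spoly n).coeff (m' + 1) := by
  rw [Ppoly]
  simp only [coeff_sub, coeff_C_mul, coeff_X_mul, coeff_derivative]
  push_cast
  ring

lemma Ppoly_deg_le (n : ℕ) (m' : ℕ) (hdeg : (Spoly n).natDegree ≤ m' + 1) :
    (Ppoly n).natDegree ≤ m' + 1 := by
  rw [Ppoly]
  refine le_trans (natDegree_sub_le _ _) (max_le ?_ ?_)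
  · exact le_trans (natDegree_C_mul_le _ _) hdeg
  · refine le_trans (natDegree_mul_le) ?_
    have h2 : (Spoly n).derivative.natDegree ≤ m' :=
      le_trans (natDegree_derivative_le _) (by omega)
    have : (X : Polynomial ℝ).natDegree = 1 := natDegree_X
    omega

lemma Ppoly_eval_zero (n : ℕ) : (Ppoly n).eval 0 = (n : ℝ) + 1 := by
  simp [Ppoly, Spoly_eval_zero]

def Good (n m : ℕ) : Prop :=
  ∃ θ : Fin m → ℝ, StrictMono θ ∧ (∀ i, θ i < 0) ∧
    (Spoly n).natDegree = m ∧ 0 < (Spoly n).leadingCoeff ∧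
    (Spoly n).roots = Multiset.map θ Finset.univ.val

lemma Spoly_succ_eq (n : ℕ) : Spoly (n + 1) =
    (1 + Polynomial.C (n : ℝ) * X) * Spoly n + X * (1 - 2 * X) * (Spoly n).derivative := by
  rfl

lemma good_two : Good 2 1 := by
  have h1 : Spoly 1 = 1 := by
    rw [Spoly_succ_eq]
    simp [Spoly]
  have hS2 : Spoly 2 = X - Polynomial.C (-1 : ℝ) := by
    rw [Spoly_succ_eq, h1]
    simp
    ring
  refine ⟨fun _ => (-1 : ℝ), ?_, fun _ => by norm_num, ?_, ?_, ?_⟩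
  · intro i j h
    exact absurd (Subsingleton.elim i j) (ne_of_lt h)
  · rw [hS2]; exact natDegree_X_sub_C _
  · rw [hS2]
    have := (monic_X_sub_C (-1 : ℝ)).leadingCoeff
    rw [this]; norm_num
  · rw [hS2, roots_X_sub_C]
    simp

noncomputable def pts {M : ℕ} (θ : Fin M → ℝ) (j : ℕ) : ℝ :=
  if h : j < M then θ ⟨j, h⟩ else 0

lemma pts_lt {M : ℕ} (θ : Fin M → ℝ) (j : ℕ) (h : j < M) : pts θ j = θ ⟨j, h⟩ := dif_pos h

lemma pts_ge {M : ℕ} (θ : Fin M → ℝ) (j : ℕ) (h : ¬ j < M) : pts θ j = 0 := dif_neg h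

noncomputable def pts2 {M : ℕ} (θ : Fin M → ℝ) (t₀ : ℝ) (j : ℕ) : ℝ :=
  if j = 0 then t₀ else pts θ (j - 1)

lemma pts2_zero {M : ℕ} (θ : Fin M → ℝ) (t₀ : ℝ) : pts2 θ t₀ 0 = t₀ := if_pos rfl

lemma pts2_pos {M : ℕ} (θ : Fin M → ℝ) (t₀ : ℝ) (j : ℕ) (h : j ≠ 0) :
    pts2 θ t₀ j = pts θ (j - 1) := if_neg h

lemma good_step (n M : ℕ) (hn : 2 ≤ n) (hM : n / 2 = M) (hg : Good n M) :
    Good (n + 1) ((n + 1) / 2) := by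
  obtain ⟨θ, hθmono, hθneg, hdeg, hlead, hroots⟩ := hg
  have hM1 : 1 ≤ M := by omega
  have hSθ : ∀ i : Fin M, (Spoly n).eval (θ i) = 0 := by
    intro i
    have hmem : θ i ∈ (Spoly n).roots := by
      rw [hroots, Multiset.mem_map]; exact ⟨i, by simp, rfl⟩
    exact (Polynomial.mem_roots'.1 hmem).2
  have hd := fun i : Fin M => deriv_sign hθmono hdeg hlead hroots i
  have hevS : ∀ i : Fin M, (Spoly (n + 1)).eval (θ i) =
      θ i * (1 - 2 * θ i) * ((Spoly n).derivative.eval (θ i)) := by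
    intro i
    rw [Spoly_succ_eq]
    simp [hSθ i]
  have hsucc : ∀ i : Fin M, 0 < (-1 : ℝ) ^ (M - i.val) * (Spoly (n + 1)).eval (θ i) := by
    intro i
    have hc : θ i * (1 - 2 * θ i) < 0 :=
      mul_neg_of_neg_of_pos (hθneg i) (by linarith [hθneg i])
    have he : (-1 : ℝ) ^ (M - i.val) = -(-1 : ℝ) ^ (M - 1 - i.val) := by
      rw [show M - i.val = (M - 1 - i.val) + 1 from by omega, pow_succ]; ring
    rw [hevS i, he]
    nlinarith [mul_pos (neg_pos.mpr hc) (hd i)]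
  have hq0 : (Spoly (n + 1)).eval 0 = 1 := Spoly_eval_zero (n + 1)
  have hqne : Spoly (n + 1) ≠ 0 := Spoly_ne_zero (n + 1)
  have hcoeffS : (Spoly n).coeff M = (Spoly n).leadingCoeff := by rw [← hdeg]; rfl
  have hdeg' : (Spoly n).natDegree = (M - 1) + 1 := by omega
  have hcoefftop : (Spoly (n + 1)).coeff (M + 1) = ((n : ℝ) - 2 * M) * (Spoly n).leadingCoeff := by
    have h := coeff_step_top (Spoly n) (n : ℝ) (M - 1) hdeg'
    rw [Spoly_succ_eq, show M + 1 = (M - 1) + 2 from by omega, h,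
      show (M - 1) + 1 = M from by omega, hcoeffS]
    rw [show ((((M - 1 : ℕ)) : ℝ) + 1) = (M : ℝ) from by push_cast [Nat.cast_sub hM1]; ring]
  have hdegle : (Spoly (n + 1)).natDegree ≤ M + 1 := by
    rw [Spoly_succ_eq, show M + 1 = (M - 1) + 2 from by omega]
    exact deg_step_le (Spoly n) (n : ℝ) (M - 1) (by omega)
  rcases Nat.even_or_odd n with he | ho
  · -- even case : n = 2 M, new degree M
    obtain ⟨w, hw⟩ := he
    have hn2 : n = 2 * M := by omega
    have htarget : (n + 1) / 2 = M := by omega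
    have hc0 : (Spoly (n + 1)).coeff (M + 1) = 0 := by
      rw [hcoefftop, show ((n : ℝ) - 2 * M) = 0 from by rw [hn2]; push_cast; ring, zero_mul]
    have hdegle' : (Spoly (n + 1)).natDegree ≤ M := by
      by_contra hcon
      have h1 : (Spoly (n + 1)).natDegree = M + 1 := by omega
      have h2 := Polynomial.leadingCoeff_ne_zero.2 hqne
      rw [Polynomial.leadingCoeff, h1, hc0] at h2
      exact h2 rfl
    have hpt : ∀ j, j ≤ M → 0 < (-1 : ℝ) ^ (M - j) * (Spoly (n + 1)).eval (pts θ j) := by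
      intro j hj
      by_cases h : j < M
      · rw [pts_lt θ j h]
        exact hsucc ⟨j, h⟩
      · have hj' : j = M := by omega
        rw [pts_ge θ j h, hj', Nat.sub_self, pow_zero, hq0]
        norm_num
    have hmono : ∀ i, i + 1 ≤ M → pts θ i < pts θ (i + 1) := by
      intro i hi
      rw [pts_lt θ i (by omega)]
      by_cases h : i + 1 < M
      · rw [pts_lt θ (i + 1) h]
        exact hθmono (by simp [Fin.lt_def])
      · rw [pts_ge θ (i + 1) h]
        exact hθneg _
    have hsign : ∀ i, i + 1 ≤ M →
        (Spoly (n + 1)).eval (pts θ i) * (Spoly (n + 1)).eval (pts θ (i + 1)) < 0 := by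
      intro i hi
      have h1 := hpt i (by omega)
      have h2 := hpt (i + 1) hi
      rw [show M - i = (M - (i + 1)) + 1 from by omega] at h1
      exact mul_neg_of_signs h1 h2
    obtain ⟨ξ, hξmono, hξmem, hξroots, hξdeg⟩ :=
      roots_of_sign_changes (Spoly (n + 1)) M hqne hdegle' (pts θ) hmono hsign
    have hξneg : ∀ i, ξ i < 0 := by
      intro i
      have h2 := (hξmem i).2
      by_cases h : i.val + 1 < M
      · rw [pts_lt θ _ h] at h2
        exact lt_trans h2 (hθneg _)
      · rwa [pts_ge θ _ h] at h2
    rw [htarget]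
    exact ⟨ξ, hξmono, hξneg, hξdeg, lead_pos_of _ hq0 ξ hξneg hξroots hξdeg, hξroots⟩
  · -- odd case : n = 2 M + 1, new degree M + 1
    obtain ⟨w, hw⟩ := ho
    have hn2 : n = 2 * M + 1 := by omega
    have htarget : (n + 1) / 2 = M + 1 := by omega
    have hctop : (Spoly (n + 1)).coeff (M + 1) = (Spoly n).leadingCoeff := by
      rw [hcoefftop, show ((n : ℝ) - 2 * M) = 1 from by rw [hn2]; push_cast; ring, one_mul]
    have hdegeq : (Spoly (n + 1)).natDegree = M + 1 := by
      refine le_antisymm hdegle (Polynomial.le_natDegree_of_ne_zero ?_)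
      rw [hctop]; exact ne_of_gt hlead
    have hleadq : 0 < (Spoly (n + 1)).leadingCoeff := by
      rw [Polynomial.leadingCoeff, hdegeq, hctop]; exact hlead
    obtain ⟨t₀, ht₀, ht₀sign⟩ :=
      exists_left_point (Spoly (n + 1)) hleadq (by omega) (θ ⟨0, by omega⟩)
    rw [hdegeq] at ht₀sign
    have hpt : ∀ j, j ≤ M + 1 →
        0 < (-1 : ℝ) ^ (M + 1 - j) * (Spoly (n + 1)).eval (pts2 θ t₀ j) := by
      intro j hj
      rcases Nat.eq_zero_or_pos j with rfl | hjpos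
      · rw [pts2_zero]
        simpa using ht₀sign
      · rw [pts2_pos θ t₀ j (by omega)]
        by_cases h : j - 1 < M
        · rw [pts_lt θ _ h, show M + 1 - j = M - (j - 1) from by omega]
          exact hsucc ⟨j - 1, h⟩
        · have hj' : j = M + 1 := by omega
          rw [pts_ge θ _ h, hj', Nat.sub_self, pow_zero, hq0]
          norm_num
    have hmono : ∀ i, i + 1 ≤ M + 1 → pts2 θ t₀ i < pts2 θ t₀ (i + 1) := by
      intro i hi
      rcases Nat.eq_zero_or_pos i with rfl | hipos
      · rw [pts2_zero, pts2_pos θ t₀ 1 one_ne_zero, pts_lt θ 0 (by omega)]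
        exact ht₀
      · rw [pts2_pos θ t₀ i (by omega), pts2_pos θ t₀ (i + 1) (by omega),
          pts_lt θ (i - 1) (by omega)]
        by_cases h : i + 1 - 1 < M
        · rw [pts_lt θ _ h]
          exact hθmono (by simp [Fin.lt_def]; omega)
        · rw [pts_ge θ _ h]
          exact hθneg _
    have hsign : ∀ i, i + 1 ≤ M + 1 →
        (Spoly (n + 1)).eval (pts2 θ t₀ i) * (Spoly (n + 1)).eval (pts2 θ t₀ (i + 1)) < 0 := by
      intro i hi
      have h1 := hpt i (by omega)
      have h2 := hpt (i + 1) hi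
      rw [show M + 1 - i = (M + 1 - (i + 1)) + 1 from by omega] at h1
      exact mul_neg_of_signs h1 h2
    obtain ⟨ξ, hξmono, hξmem, hξroots, hξdeg⟩ :=
      roots_of_sign_changes (Spoly (n + 1)) (M + 1) hqne (by omega) (pts2 θ t₀) hmono hsign
    have hξneg : ∀ i, ξ i < 0 := by
      intro i
      have h2 := (hξmem i).2
      rw [pts2_pos θ t₀ _ (by omega)] at h2
      by_cases h : i.val + 1 - 1 < M
      · rw [pts_lt θ _ h] at h2
        exact lt_trans h2 (hθneg _)
      · rwa [pts_ge θ _ h] at h2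
    rw [htarget]
    exact ⟨ξ, hξmono, hξneg, hξdeg, hleadq, hξroots⟩

lemma good_all (n : ℕ) (hn : 2 ≤ n) : Good n (n / 2) := by
  induction n, hn using Nat.le_induction with
  | base => exact good_two
  | succ n hn ih => exact good_step n (n / 2) hn rfl ih

/-- For every `n ≥ 2` the polynomial `P_{n+1}(x) = (n+1)·S_n(x) - x·S_n'(x)` has only
real zeros, all simple and in `(-∞,0)`, and `P_{n+1}` alternates left of `S_n`:
writing `ξ` for the zeros of `P_{n+1}` and `θ` for those of `S_n` (both of degree
`⌊n/2⌋`), we have `ξ₁ < θ₁ < ξ₂ < θ₂ < ⋯ < ξ_m < θ_m`; in particular between any two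
consecutive zeros of `S_n` lies exactly one zero of `P_{n+1}`, and one additional zero
of `P_{n+1}` lies below the smallest zero of `S_n`. -/
theorem stmt9 (n : ℕ) (hn : 2 ≤ n) :
    ∃ ξ θ : Fin (n / 2) → ℝ,
      StrictMono ξ ∧ StrictMono θ ∧
      (∀ i, ξ i < 0) ∧
      (Ppoly n).natDegree = n / 2 ∧ (Spoly n).natDegree = n / 2 ∧
      (Ppoly n).roots = Multiset.map ξ (Finset.univ : Finset (Fin (n / 2))).val ∧
      (Spoly n).roots = Multiset.map θ (Finset.univ : Finset (Fin (n / 2))).val ∧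
      (∀ i, ξ i < θ i) ∧
      (∀ i : ℕ, (h : i + 1 < n / 2) → θ ⟨i, Nat.lt_of_succ_lt h⟩ < ξ ⟨i + 1, h⟩) := by
  obtain ⟨θ, hθmono, hθneg, hdeg, hlead, hroots⟩ := good_all n hn
  have hM1 : 1 ≤ n / 2 := by omega
  have hSθ : ∀ i : Fin (n / 2), (Spoly n).eval (θ i) = 0 := by
    intro i
    have hmem : θ i ∈ (Spoly n).roots := by
      rw [hroots, Multiset.mem_map]; exact ⟨i, by simp, rfl⟩
    exact (Polynomial.mem_roots'.1 hmem).2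
  have hd := fun i : Fin (n / 2) => deriv_sign hθmono hdeg hlead hroots i
  have hP0 : (Ppoly n).eval 0 = (n : ℝ) + 1 := Ppoly_eval_zero n
  have hPne : Ppoly n ≠ 0 := by
    intro h
    rw [h, Polynomial.eval_zero] at hP0
    have h2 : (0 : ℝ) < (n : ℝ) + 1 := by positivity
    rw [← hP0] at h2; exact lt_irrefl _ h2
  have hdeg' : (Spoly n).natDegree = (n / 2 - 1) + 1 := by omega
  have hdegleP : (Ppoly n).natDegree ≤ n / 2 := by
    rw [show n / 2 = (n / 2 - 1) + 1 from by omega]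
    exact Ppoly_deg_le n (n / 2 - 1) (by omega)
  have hcoeffS : (Spoly n).coeff (n / 2) = (Spoly n).leadingCoeff := by rw [← hdeg]; rfl
  have hcP : (Ppoly n).coeff (n / 2) =
      ((n : ℝ) + 1 - ((n / 2 : ℕ) : ℝ)) * (Spoly n).leadingCoeff := by
    have h := Ppoly_coeff_top n (n / 2 - 1) hdeg'
    rw [show n / 2 - 1 + 1 = n / 2 from by omega] at h
    rw [h, hcoeffS]
    congr 1
    push_cast [Nat.cast_sub hM1]
    ring
  have hcPpos : 0 < (Ppoly n).coeff (n / 2) := by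
    rw [hcP]
    have h2 : ((n / 2 : ℕ) : ℝ) ≤ (n : ℝ) := Nat.cast_le.2 (by omega)
    have h3 : 0 < (n : ℝ) + 1 - ((n / 2 : ℕ) : ℝ) := by linarith
    exact mul_pos h3 hlead
  have hdegP : (Ppoly n).natDegree = n / 2 :=
    le_antisymm hdegleP (Polynomial.le_natDegree_of_ne_zero (ne_of_gt hcPpos))
  have hleadP : 0 < (Ppoly n).leadingCoeff := by
    rw [Polynomial.leadingCoeff, hdegP]; exact hcPpos
  obtain ⟨t₀, ht₀, ht₀sign⟩ :=
    exists_left_point (Ppoly n) hleadP (by rw [hdegP]; omega) (θ ⟨0, by omega⟩)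
  rw [hdegP] at ht₀sign
  have hPθ : ∀ i : Fin (n / 2),
      (Ppoly n).eval (θ i) = (-θ i) * ((Spoly n).derivative.eval (θ i)) := by
    intro i
    rw [Ppoly]
    simp [hSθ i]
  have hsignP : ∀ i : Fin (n / 2),
      0 < (-1 : ℝ) ^ (n / 2 - 1 - i.val) * (Ppoly n).eval (θ i) := by
    intro i
    rw [hPθ i]
    have hneg : 0 < -θ i := by linarith [hθneg i]
    nlinarith [mul_pos hneg (hd i)]
  have hpt : ∀ j, j ≤ n / 2 →
      0 < (-1 : ℝ) ^ (n / 2 - j) * (Ppoly n).eval (pts2 θ t₀ j) := by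
    intro j hj
    rcases Nat.eq_zero_or_pos j with rfl | hjpos
    · rw [pts2_zero]
      simpa using ht₀sign
    · rw [pts2_pos θ t₀ j (by omega), pts_lt θ (j - 1) (by omega),
        show n / 2 - j = n / 2 - 1 - (j - 1) from by omega]
      exact hsignP ⟨j - 1, by omega⟩
  have hmono : ∀ i, i + 1 ≤ n / 2 → pts2 θ t₀ i < pts2 θ t₀ (i + 1) := by
    intro i hi
    rcases Nat.eq_zero_or_pos i with rfl | hipos
    · rw [pts2_zero, pts2_pos θ t₀ 1 one_ne_zero, pts_lt θ 0 (by omega)]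
      exact ht₀
    · rw [pts2_pos θ t₀ i (by omega), pts2_pos θ t₀ (i + 1) (by omega),
        pts_lt θ (i - 1) (by omega), pts_lt θ (i + 1 - 1) (by omega)]
      exact hθmono (by simp only [Fin.lt_def]; omega)
  have hsign : ∀ i, i + 1 ≤ n / 2 →
      (Ppoly n).eval (pts2 θ t₀ i) * (Ppoly n).eval (pts2 θ t₀ (i + 1)) < 0 := by
    intro i hi
    have h1 := hpt i (by omega)
    have h2 := hpt (i + 1) hi
    rw [show n / 2 - i = (n / 2 - (i + 1)) + 1 from by omega] at h1
    exact mul_neg_of_signs h1 h2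
  obtain ⟨ξ, hξmono, hξmem, hξroots, hξdeg⟩ :=
    roots_of_sign_changes (Ppoly n) (n / 2) hPne hdegleP (pts2 θ t₀) hmono hsign
  have hlt : ∀ i : Fin (n / 2), ξ i < θ i := by
    intro i
    have h2 := (hξmem i).2
    rw [pts2_pos θ t₀ _ (by omega), pts_lt θ (i.val + 1 - 1) (by omega)] at h2
    have : θ ⟨i.val + 1 - 1, by omega⟩ = θ i := by congr 1
    rwa [this] at h2
  refine ⟨ξ, θ, hξmono, hθmono, fun i => lt_trans (hlt i) (hθneg i),
    hξdeg, hdeg, hξroots, hroots, hlt, ?_⟩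
  intro i h
  have h1 := (hξmem ⟨i + 1, h⟩).1
  have hv : ((⟨i + 1, h⟩ : Fin (n / 2)) : ℕ) = i + 1 := rfl
  rw [hv, pts2_pos θ t₀ (i + 1) (by omega), pts_lt θ (i + 1 - 1) (by omega)] at h1
  have h2 : θ ⟨i + 1 - 1, by omega⟩ = θ ⟨i, Nat.lt_of_succ_lt h⟩ := by congr 1
  rwa [h2] at h1
end

section
/- For all n ≥ 0, S_n(x,y,q) = Σ_{i=0}^n C(n,i)·(yq-q)^i·S_{n-i}(x,q), where S_n(x,y,q) = Σ_{σ} x^{exc(σ)} y^{fix(σ)} q^{cyc(σ)} over simsun permutations of the second kind of [n] and S_n(x,q) = S_n(x,1,q). -/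
open Classical in
/-- First return of `x` to the set `{y : (y:ℕ) < m}` under iteration of `σ`
(this is the image of `x` under the permutation induced by `σ` on that set,
i.e. on the letters remaining after removing the `n - m` largest letters). -/
noncomputable def firstReturn {n : ℕ} (σ : Equiv.Perm (Fin n)) (m : ℕ) (x : Fin n) : Fin n :=
  if h : ∃ j : ℕ, 0 < j ∧ (((σ ^ j) x : Fin n) : ℕ) < m then (σ ^ Nat.find h) x else x

/-- A simsun permutation of the second kind: for every `k`, after removing the `k`
largest letters (restricting the cycle structure to the remaining letters), the
resulting permutation has no double excedances, i.e. no value `x` with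
`σ⁻¹(x) < x < σ(x)` in the induced permutation. -/
def IsSimsun2 {n : ℕ} (σ : Equiv.Perm (Fin n)) : Prop :=
  ∀ m : ℕ, m ≤ n → ∀ x : Fin n, (x : ℕ) < m →
    ¬ (((firstReturn σ⁻¹ m x : Fin n) : ℕ) < (x : ℕ) ∧
       (x : ℕ) < ((firstReturn σ m x : Fin n) : ℕ))

/-- Number of excedances of `σ`: indices `i` with `σ(i) > i`. -/
def excOf {n : ℕ} (σ : Equiv.Perm (Fin n)) : ℕ :=
  ((Finset.univ : Finset (Fin n)).filter (fun i : Fin n => (i : ℕ) < ((σ i : Fin n) : ℕ))).card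

/-- Number of fixed points of `σ`. -/
def fixOf {n : ℕ} (σ : Equiv.Perm (Fin n)) : ℕ :=
  ((Finset.univ : Finset (Fin n)).filter (fun i : Fin n => σ i = i)).card

/-- Number of cycles of `σ` in its full cycle decomposition (fixed points count as
cycles). -/
def cycOf {n : ℕ} (σ : Equiv.Perm (Fin n)) : ℕ :=
  σ.cycleType.card + fixOf σ

open Classical MvPolynomial in
/-- `S_n(x,y,q) = Σ_σ x^{exc(σ)} y^{fix(σ)} q^{cyc(σ)}` over simsun permutations of the
second kind of `[n]`; here `x = X 0`, `y = X 1`, `q = X 2`. -/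
noncomputable def S3poly (n : ℕ) : MvPolynomial (Fin 3) ℚ :=
  ∑ σ : Equiv.Perm (Fin n),
    if IsSimsun2 σ then X 0 ^ excOf σ * X 1 ^ fixOf σ * X 2 ^ cycOf σ else 0

open Classical MvPolynomial in
/-- `S_n(x,q) = S_n(x,1,q) = Σ_σ x^{exc(σ)} q^{cyc(σ)}` over simsun permutations of the
second kind of `[n]`. -/
noncomputable def S2poly (n : ℕ) : MvPolynomial (Fin 3) ℚ :=
  ∑ σ : Equiv.Perm (Fin n),
    if IsSimsun2 σ then X 0 ^ excOf σ * X 2 ^ cycOf σ else 0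

section Aux
open Classical MvPolynomial

-- iterates through an embedding
theorem pow_apply_comm {n k : ℕ} {σ : Equiv.Perm (Fin n)} {τ : Equiv.Perm (Fin k)}
    {e : Fin k → Fin n} (hc : ∀ y, σ (e y) = e (τ y)) (j : ℕ) (y : Fin k) :
    (σ ^ j) (e y) = e ((τ ^ j) y) := by
  induction j with
  | zero => simp
  | succ j ih =>
      rw [pow_succ', pow_succ']
      simp only [Equiv.Perm.mul_apply, hc, ih]

theorem firstReturn_comm {n k : ℕ} {σ : Equiv.Perm (Fin n)} {τ : Equiv.Perm (Fin k)}
    {e : Fin k → Fin n} (hc : ∀ y, σ (e y) = e (τ y)) {m m₀ : ℕ}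
    (hm : ∀ y : Fin k, ((e y : Fin n) : ℕ) < m ↔ (y : ℕ) < m₀) (x : Fin k) :
    firstReturn σ m (e x) = e (firstReturn τ m₀ x) := by
  have key : ∀ j : ℕ, (0 < j ∧ (((σ ^ j) (e x) : Fin n) : ℕ) < m) ↔
      (0 < j ∧ (((τ ^ j) x : Fin k) : ℕ) < m₀) := by
    intro j
    rw [pow_apply_comm hc, hm]
  unfold firstReturn
  by_cases h1 : ∃ j : ℕ, 0 < j ∧ (((σ ^ j) (e x) : Fin n) : ℕ) < m
  · have h2 : ∃ j : ℕ, 0 < j ∧ (((τ ^ j) x : Fin k) : ℕ) < m₀ := by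
      obtain ⟨j, hj⟩ := h1; exact ⟨j, (key j).mp hj⟩
    rw [dif_pos h1, dif_pos h2]
    have hfind : Nat.find h1 = Nat.find h2 :=
      le_antisymm (Nat.find_le ((key _).mpr (Nat.find_spec h2)))
        (Nat.find_le ((key _).mp (Nat.find_spec h1)))
    rw [hfind, pow_apply_comm hc]
  · have h2 : ¬ ∃ j : ℕ, 0 < j ∧ (((τ ^ j) x : Fin k) : ℕ) < m₀ := by
      intro ⟨j, hj⟩; exact h1 ⟨j, (key j).mpr hj⟩
    rw [dif_neg h1, dif_neg h2]

theorem firstReturn_fixed {n : ℕ} {σ : Equiv.Perm (Fin n)} {x : Fin n} (hx : σ x = x) (m : ℕ) :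
    firstReturn σ m x = x := by
  have hit : ∀ j : ℕ, (σ ^ j) x = x := by
    intro j; induction j with
    | zero => simp
    | succ j ih => rw [pow_succ, Equiv.Perm.mul_apply, hx, ih]
  unfold firstReturn
  split
  · rw [hit]
  · rfl

-- down-closed subsets of Fin k
theorem mem_iff_lt_card_of_downclosed {k : ℕ} (s : Finset (Fin k))
    (hs : ∀ a b : Fin k, a ≤ b → b ∈ s → a ∈ s) (a : Fin k) : a ∈ s ↔ (a : ℕ) < s.card := by
  constructor
  · intro ha
    have hsub : Finset.Iic a ⊆ s := fun b hb => hs b a (Finset.mem_Iic.mp hb) ha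
    have := Finset.card_le_card hsub
    rw [Fin.card_Iic] at this
    omega
  · intro ha
    by_contra hna
    have hsub : s ⊆ Finset.Iio a := by
      intro b hb
      rw [Finset.mem_Iio]
      by_contra hab
      exact hna (hs a b (le_of_not_gt hab) hb)
    have := Finset.card_le_card hsub
    rw [Fin.card_Iio] at this
    omega

section Setup
variable {n k : ℕ} (F : Finset (Fin n)) (hk : Fᶜ.card = k)

noncomputable def eC : Fin k → Fin n := fun y => ((Fᶜ.orderIsoOfFin hk) y : Fin n)

theorem eC_strictMono : StrictMono (eC F hk) := by
  intro a b hab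
  exact (Fᶜ.orderIsoOfFin hk).strictMono hab

theorem eC_mem (y : Fin k) : eC F hk y ∈ Fᶜ := ((Fᶜ.orderIsoOfFin hk) y).2

theorem eC_surj {x : Fin n} (hx : x ∈ Fᶜ) : ∃ y, eC F hk y = x :=
  ⟨(Fᶜ.orderIsoOfFin hk).symm ⟨x, hx⟩, by simp [eC]⟩

noncomputable def extPerm (τ : Equiv.Perm (Fin k)) : Equiv.Perm (Fin n) :=
  τ.extendDomain (Fᶜ.orderIsoOfFin hk).toEquiv

theorem extPerm_comm (τ : Equiv.Perm (Fin k)) (y : Fin k) :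
    extPerm F hk τ (eC F hk y) = eC F hk (τ y) :=
  τ.extendDomain_apply_image (Fᶜ.orderIsoOfFin hk).toEquiv y

theorem extPerm_fixed (τ : Equiv.Perm (Fin k)) {x : Fin n} (hx : x ∈ F) :
    extPerm F hk τ x = x :=
  τ.extendDomain_apply_not_subtype _ (by simpa using hx)

theorem extPerm_inv (τ : Equiv.Perm (Fin k)) :
    (extPerm F hk τ)⁻¹ = extPerm F hk τ⁻¹ :=
  Equiv.Perm.extendDomain_inv _ _

end Setup


section Transfer
variable {n k : ℕ} (F : Finset (Fin n)) (hk : Fᶜ.card = k) (τ : Equiv.Perm (Fin k))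

theorem isSimsun2_extPerm_iff : IsSimsun2 (extPerm F hk τ) ↔ IsSimsun2 τ := by
  have hmono := eC_strictMono F hk
  have hc : ∀ y, extPerm F hk τ (eC F hk y) = eC F hk (τ y) := extPerm_comm F hk τ
  have hcinv : ∀ y, (extPerm F hk τ)⁻¹ (eC F hk y) = eC F hk (τ⁻¹ y) := by
    intro y; rw [extPerm_inv]; exact extPerm_comm F hk τ⁻¹ y
  have elt : ∀ a b : Fin k, ((eC F hk a : Fin n) : ℕ) < ((eC F hk b : Fin n) : ℕ) ↔
      (a : ℕ) < (b : ℕ) := fun a b => hmono.lt_iff_lt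
  have ele : ∀ a b : Fin k, ((eC F hk a : Fin n) : ℕ) ≤ ((eC F hk b : Fin n) : ℕ) ↔
      (a : ℕ) ≤ (b : ℕ) := fun a b => hmono.le_iff_le
  constructor
  · -- from big to small
    intro hσ m₀ hm₀ x hx
    have hm₀1 : 0 < m₀ := by omega
    have hlt : m₀ - 1 < k := by omega
    have hmn : ((eC F hk ⟨m₀ - 1, hlt⟩ : Fin n) : ℕ) + 1 ≤ n :=
      (eC F hk ⟨m₀ - 1, hlt⟩).isLt
    have hm : ∀ y : Fin k,
        ((eC F hk y : Fin n) : ℕ) < ((eC F hk ⟨m₀ - 1, hlt⟩ : Fin n) : ℕ) + 1 ↔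
        (y : ℕ) < m₀ := by
      intro y
      have h1 := ele y ⟨m₀ - 1, hlt⟩
      simp only [Fin.val_mk] at h1
      omega
    have hxm := (hm x).mpr hx
    have key := hσ _ hmn (eC F hk x) hxm
    rw [firstReturn_comm hc hm, firstReturn_comm hcinv hm] at key
    intro ⟨h1, h2⟩
    exact key ⟨(elt _ _).mpr h1, (elt _ _).mpr h2⟩
  · -- from small to big
    intro hτ m hmn x hx
    by_cases hxF : x ∈ F
    · rw [firstReturn_fixed (extPerm_fixed F hk τ hxF)]
      omega
    · obtain ⟨y, rfl⟩ := eC_surj F hk (Finset.mem_compl.mpr hxF)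
      set s : Finset (Fin k) :=
        Finset.univ.filter (fun y' : Fin k => ((eC F hk y' : Fin n) : ℕ) < m) with hs
      have hdown : ∀ a b : Fin k, a ≤ b → b ∈ s → a ∈ s := by
        intro a b hab hb
        simp only [hs, Finset.mem_filter, Finset.mem_univ, true_and] at hb ⊢
        have h1 := (ele a b).mpr hab
        omega
      have hm : ∀ y' : Fin k, ((eC F hk y' : Fin n) : ℕ) < m ↔ (y' : ℕ) < s.card := by
        intro y'
        rw [← mem_iff_lt_card_of_downclosed s hdown y']
        simp [hs]
      have hm₀k : s.card ≤ k := by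
        have := Finset.card_le_univ s
        simpa using this
      have key := hτ s.card hm₀k y ((hm y).mp hx)
      rw [firstReturn_comm hc hm, firstReturn_comm hcinv hm]
      intro ⟨h1, h2⟩
      exact key ⟨(elt _ _).mp h1, (elt _ _).mp h2⟩

end Transfer


section Stats
variable {n k : ℕ} (F : Finset (Fin n)) (hk : Fᶜ.card = k) (τ : Equiv.Perm (Fin k))

theorem excOf_extPerm : excOf (extPerm F hk τ) = excOf τ := by
  have hmono := eC_strictMono F hk
  have hinj := hmono.injective
  have himg : (Finset.univ : Finset (Fin n)).filter
        (fun z : Fin n => (z : ℕ) < ((extPerm F hk τ z : Fin n) : ℕ)) =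
      ((Finset.univ : Finset (Fin k)).filter
        (fun y : Fin k => (y : ℕ) < ((τ y : Fin k) : ℕ))).image (eC F hk) := by
    ext z
    simp only [Finset.mem_filter, Finset.mem_univ, true_and, Finset.mem_image]
    by_cases hzF : z ∈ F
    · rw [extPerm_fixed F hk τ hzF]
      constructor
      · omega
      · rintro ⟨y, _, rfl⟩
        exact absurd (eC_mem F hk y) (by simpa using hzF)
    · obtain ⟨y, rfl⟩ := eC_surj F hk (Finset.mem_compl.mpr hzF)
      rw [extPerm_comm]
      constructor
      · intro h
        exact ⟨y, hmono.lt_iff_lt.mp (show eC F hk y < eC F hk (τ y) from h), rfl⟩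
      · rintro ⟨y', hy', hee⟩
        obtain rfl := hinj hee
        exact hmono.lt_iff_lt.mpr hy'
  rw [excOf, himg, Finset.card_image_of_injective _ hinj, excOf]

theorem fixOf_extPerm : fixOf (extPerm F hk τ) = F.card + fixOf τ := by
  have hmono := eC_strictMono F hk
  have hinj := hmono.injective
  have himg : (Finset.univ : Finset (Fin n)).filter (fun z => extPerm F hk τ z = z) =
      F ∪ ((Finset.univ : Finset (Fin k)).filter (fun y => τ y = y)).image (eC F hk) := by
    ext z
    simp only [Finset.mem_filter, Finset.mem_univ, true_and, Finset.mem_union,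
      Finset.mem_image]
    by_cases hzF : z ∈ F
    · simp [hzF, extPerm_fixed F hk τ hzF]
    · obtain ⟨y, rfl⟩ := eC_surj F hk (Finset.mem_compl.mpr hzF)
      rw [extPerm_comm]
      constructor
      · intro h
        exact Or.inr ⟨y, hinj h, rfl⟩
      · rintro (h | ⟨y', hy', hee⟩)
        · exact absurd h hzF
        · obtain rfl := hinj hee
          rw [hy']
  rw [fixOf, himg, Finset.card_union_of_disjoint, Finset.card_image_of_injective _ hinj, fixOf]
  rw [Finset.disjoint_left]
  intro a haF ha
  obtain ⟨y, -, rfl⟩ := Finset.mem_image.mp ha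
  exact absurd (eC_mem F hk y) (by simpa using haF)

theorem cycleType_extPerm : (extPerm F hk τ).cycleType = τ.cycleType :=
  Equiv.Perm.cycleType_extendDomain _

theorem cycOf_extPerm : cycOf (extPerm F hk τ) = cycOf τ + F.card := by
  rw [cycOf, cycOf, cycleType_extPerm, fixOf_extPerm]
  ring

end Stats

section Bij
open MvPolynomial

noncomputable def Dsum (k : ℕ) (u : ℕ → ℕ → MvPolynomial (Fin 3) ℚ) : MvPolynomial (Fin 3) ℚ :=
  ∑ τ : Equiv.Perm (Fin k), if fixOf τ = 0 ∧ IsSimsun2 τ then u (excOf τ) (cycOf τ) else 0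

variable {n k : ℕ}

theorem extPerm_injective (F : Finset (Fin n)) (hk : Fᶜ.card = k) :
    Function.Injective (extPerm F hk) := fun τ1 τ2 h => by
  ext y
  have := congrArg (fun ρ : Equiv.Perm (Fin n) => ρ (eC F hk y)) h
  simp only [extPerm_comm] at this
  exact Fin.val_eq_of_eq ((eC_strictMono F hk).injective this)

/-- fixed-point set of `extPerm` when `τ` is fixed-point free. -/
theorem fixedSet_extPerm (F : Finset (Fin n)) (hk : Fᶜ.card = k) (τ : Equiv.Perm (Fin k))
    (hτ : fixOf τ = 0) :
    (Finset.univ : Finset (Fin n)).filter (fun x => extPerm F hk τ x = x) = F := by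
  have hnofix : ∀ y : Fin k, τ y ≠ y := by
    intro y hy
    have : y ∈ (Finset.univ : Finset (Fin k)).filter (fun i : Fin k => τ i = i) := by
      simp [hy]
    rw [Finset.card_eq_zero.mp hτ] at this
    simp at this
  ext z
  simp only [Finset.mem_filter, Finset.mem_univ, true_and]
  by_cases hzF : z ∈ F
  · simp [hzF, extPerm_fixed F hk τ hzF]
  · obtain ⟨y, rfl⟩ := eC_surj F hk (Finset.mem_compl.mpr hzF)
    rw [extPerm_comm]
    constructor
    · intro h
      exact absurd ((eC_strictMono F hk).injective h) (hnofix y)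
    · intro h; exact absurd h hzF

noncomputable def restrPerm (F : Finset (Fin n)) (hk : Fᶜ.card = k) (σ : Equiv.Perm (Fin n))
    (hp : ∀ x : Fin n, x ∈ Fᶜ ↔ σ x ∈ Fᶜ) : Equiv.Perm (Fin k) :=
  (Fᶜ.orderIsoOfFin hk).toEquiv.symm.permCongr (σ.subtypePerm (fun x => (hp x).symm))

theorem compl_iff_of_fixedSet {F : Finset (Fin n)} {σ : Equiv.Perm (Fin n)}
    (hσF : (Finset.univ : Finset (Fin n)).filter (fun x => σ x = x) = F) :
    ∀ x : Fin n, x ∈ Fᶜ ↔ σ x ∈ Fᶜ := by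
  intro x
  have hfix : ∀ z : Fin n, (σ z = z ↔ z ∈ F) := by
    intro z; rw [← hσF]; simp
  simp only [Finset.mem_compl, ← hfix]
  constructor
  · intro h h2
    exact h (σ.injective h2)
  · intro h h2
    apply h; simp [h2]

theorem extPerm_restrPerm (F : Finset (Fin n)) (hk : Fᶜ.card = k) (σ : Equiv.Perm (Fin n))
    (hp : ∀ x : Fin n, x ∈ Fᶜ ↔ σ x ∈ Fᶜ) (hfixF : ∀ z ∈ F, σ z = z) :
    extPerm F hk (restrPerm F hk σ hp) = σ := by
  ext z
  by_cases hzF : z ∈ F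
  · rw [extPerm_fixed F hk _ hzF, hfixF z hzF]
  · have hz : z ∈ Fᶜ := Finset.mem_compl.mpr hzF
    rw [extPerm, Equiv.Perm.extendDomain_apply_subtype _ _ hz]
    simp [restrPerm, Equiv.permCongr_apply, Equiv.Perm.subtypePerm_apply]

theorem fiber_sum (F : Finset (Fin n)) (hk : Fᶜ.card = k)
    (w : ℕ → ℕ → ℕ → MvPolynomial (Fin 3) ℚ) :
    (∑ σ ∈ (Finset.univ : Finset (Equiv.Perm (Fin n))).filter
        (fun σ => (Finset.univ : Finset (Fin n)).filter (fun x => σ x = x) = F),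
      if IsSimsun2 σ then w (excOf σ) (fixOf σ) (cycOf σ) else 0)
      = Dsum k (fun e c => w e F.card (c + F.card)) := by
  classical
  have hDsum : Dsum k (fun e c => w e F.card (c + F.card)) =
      ∑ τ ∈ (Finset.univ : Finset (Equiv.Perm (Fin k))).filter (fun τ => fixOf τ = 0),
        if IsSimsun2 τ then w (excOf τ) F.card (cycOf τ + F.card) else 0 := by
    rw [Dsum, Finset.sum_filter]
    congr 1; funext τ
    by_cases h1 : fixOf τ = 0 <;> by_cases h2 : IsSimsun2 τ <;> simp [h1, h2]
  rw [hDsum]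
  symm
  refine Finset.sum_bij' (fun τ _ => extPerm F hk τ)
    (fun σ hσ => restrPerm F hk σ
      (compl_iff_of_fixedSet (Finset.mem_filter.mp hσ).2))
    ?hi ?hj ?li ?ri ?val
  case hi =>
    intro τ hτ
    simp only [Finset.mem_filter, Finset.mem_univ, true_and] at hτ ⊢
    exact fixedSet_extPerm F hk τ hτ
  case ri =>
    intro σ hσ
    have hσF := (Finset.mem_filter.mp hσ).2
    refine extPerm_restrPerm F hk σ _ ?_
    intro z hz
    have : z ∈ (Finset.univ : Finset (Fin n)).filter (fun x => σ x = x) := by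
      rw [hσF]; exact hz
    simpa using (Finset.mem_filter.mp this).2
  case li =>
    intro τ hτ
    apply extPerm_injective F hk
    refine extPerm_restrPerm F hk _ _ ?_
    intro z hz
    exact extPerm_fixed F hk τ hz
  case hj =>
    intro σ hσ
    have hσF := (Finset.mem_filter.mp hσ).2
    simp only [Finset.mem_filter, Finset.mem_univ, true_and]
    rw [fixOf, Finset.card_eq_zero, Finset.filter_eq_empty_iff]
    intro y _
    intro hy
    have h1 : σ (eC F hk y) = eC F hk y := by
      conv_lhs => rw [← extPerm_restrPerm F hk σ (compl_iff_of_fixedSet hσF)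
        (fun z hz => by
          have : z ∈ (Finset.univ : Finset (Fin n)).filter (fun x => σ x = x) := by
            rw [hσF]; exact hz
          simpa using (Finset.mem_filter.mp this).2)]
      rw [extPerm_comm, hy]
    have h2 : eC F hk y ∈ (Finset.univ : Finset (Fin n)).filter (fun x => σ x = x) := by
      simp [h1]
    rw [hσF] at h2
    exact absurd (eC_mem F hk y) (by simpa using h2)
  case val =>
    intro τ hτ
    simp only [Finset.mem_filter, Finset.mem_univ, true_and] at hτ
    rw [isSimsun2_extPerm_iff, excOf_extPerm, fixOf_extPerm, cycOf_extPerm, hτ]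
    simp

end Bij

section Master
open MvPolynomial

theorem master (n : ℕ) (w : ℕ → ℕ → ℕ → MvPolynomial (Fin 3) ℚ) :
    (∑ σ : Equiv.Perm (Fin n), if IsSimsun2 σ then w (excOf σ) (fixOf σ) (cycOf σ) else 0)
    = ∑ i ∈ Finset.range (n + 1), (n.choose i : MvPolynomial (Fin 3) ℚ) *
        Dsum (n - i) (fun e c => w e i (c + i)) := by
  classical
  rw [← Finset.sum_fiberwise_of_maps_to
    (g := fun σ : Equiv.Perm (Fin n) => (Finset.univ : Finset (Fin n)).filter (fun x => σ x = x))
    (fun σ _ => Finset.mem_univ _)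
    (fun σ => if IsSimsun2 σ then w (excOf σ) (fixOf σ) (cycOf σ) else 0)]
  have huniv : (Finset.univ : Finset (Finset (Fin n))) =
      (Finset.range (n+1)).biUnion (fun i => Finset.powersetCard i Finset.univ) := by
    rw [← Finset.powerset_univ, Finset.powerset_card_biUnion, Finset.card_univ, Fintype.card_fin]
  rw [huniv, Finset.sum_biUnion ?disj]
  case disj =>
    intro a _ b _ hab
    exact Finset.pairwise_disjoint_powersetCard Finset.univ hab
  refine Finset.sum_congr rfl ?_
  intro i hi
  have key : ∀ F ∈ Finset.powersetCard i (Finset.univ : Finset (Fin n)),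
      (∑ σ ∈ Finset.univ.filter
          (fun σ : Equiv.Perm (Fin n) => Finset.univ.filter (fun x => σ x = x) = F),
        if IsSimsun2 σ then w (excOf σ) (fixOf σ) (cycOf σ) else 0)
      = Dsum (n - i) (fun e c => w e i (c + i)) := by
    intro F hF
    have hFcard : F.card = i := (Finset.mem_powersetCard.mp hF).2
    have hk : Fᶜ.card = n - i := by
      rw [Finset.card_compl, hFcard, Fintype.card_fin]
    rw [fiber_sum F hk w, hFcard]
  rw [Finset.sum_congr rfl key, Finset.sum_const, Finset.card_powersetCard, Finset.card_univ,
    Fintype.card_fin, nsmul_eq_mul]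

end Master

section Algebra
variable {R : Type*} [CommRing R]

theorem binom_swap (n : ℕ) (a b : R) (d : ℕ → R) :
    ∑ i ∈ Finset.range (n + 1), (n.choose i : R) * ((a + b) ^ i * d (n - i))
    = ∑ i ∈ Finset.range (n + 1), (n.choose i : R) *
        (a ^ i * ∑ j ∈ Finset.range (n - i + 1),
          ((n - i).choose j : R) * (b ^ j * d (n - i - j))) := by
  have lhs_eq : ∀ i ∈ Finset.range (n + 1),
      (n.choose i : R) * ((a + b) ^ i * d (n - i))
      = ∑ t ∈ Finset.range (i + 1),
          (n.choose i : R) * (a ^ t * b ^ (i - t) * (i.choose t : R) * d (n - i)) := by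
    intro i _
    rw [add_pow, Finset.sum_mul, Finset.mul_sum]
  rw [Finset.sum_congr rfl lhs_eq]
  have rhs_eq : ∀ t ∈ Finset.range (n + 1),
      (n.choose t : R) * (a ^ t * ∑ j ∈ Finset.range (n - t + 1),
          ((n - t).choose j : R) * (b ^ j * d (n - t - j)))
      = ∑ j ∈ Finset.range (n - t + 1),
          (n.choose t : R) * (a ^ t * (((n - t).choose j : R) * (b ^ j * d (n - t - j)))) := by
    intro t _
    rw [Finset.mul_sum, Finset.mul_sum]
  rw [Finset.sum_congr rfl rhs_eq]
  rw [Finset.sum_sigma', Finset.sum_sigma']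
  refine Finset.sum_nbij' (fun p => ⟨p.2, p.1 - p.2⟩) (fun q => ⟨q.1 + q.2, q.1⟩)
    ?_ ?_ ?_ ?_ ?_
  · intro p hp
    simp only [Finset.mem_sigma, Finset.mem_range] at hp ⊢
    omega
  · intro q hq
    simp only [Finset.mem_sigma, Finset.mem_range] at hq ⊢
    omega
  · rintro ⟨i, t⟩ hp
    simp only [Finset.mem_sigma, Finset.mem_range] at hp
    have h : t + (i - t) = i := by omega
    simp [h]
  · rintro ⟨t, j⟩ hq
    simp only [Finset.mem_sigma, Finset.mem_range] at hq
    have h : t + j - t = j := by omega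
    simp [h]
  · intro p hp
    simp only [Finset.mem_sigma, Finset.mem_range] at hp
    obtain ⟨i, t⟩ := p
    simp only [] at hp ⊢
    have hti : t ≤ i := by omega
    have hin : i ≤ n := by omega
    have h1 : n - t - (i - t) = n - i := by omega
    have h2 : (n.choose i : R) * (i.choose t : R) = (n.choose t : R) * ((n - t).choose (i - t) : R) := by
      rw [← Nat.cast_mul, ← Nat.cast_mul, Nat.choose_mul hti]
    rw [h1]
    linear_combination (a ^ t * b ^ (i - t) * d (n - i)) * h2

end Algebra


theorem Dsum_congr {k : ℕ} {u v : ℕ → ℕ → MvPolynomial (Fin 3) ℚ}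
    (h : ∀ e c, u e c = v e c) : Dsum k u = Dsum k v := by
  unfold Dsum; congr 1; funext τ; rw [h]

theorem Dsum_mul {k : ℕ} (A : MvPolynomial (Fin 3) ℚ) (u : ℕ → ℕ → MvPolynomial (Fin 3) ℚ) :
    Dsum k (fun e c => A * u e c) = A * Dsum k u := by
  unfold Dsum; rw [Finset.mul_sum]; congr 1; funext τ; rw [mul_ite, mul_zero]


end Aux

open MvPolynomial in
/-- For all `n ≥ 0`, `S_n(x,y,q) = Σ_{i=0}^n C(n,i)·(yq-q)^i·S_{n-i}(x,q)`. -/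
theorem stmt18 (n : ℕ) :
    S3poly n =
      ∑ i ∈ Finset.range (n + 1),
        (n.choose i : MvPolynomial (Fin 3) ℚ) * (X 1 * X 2 - X 2) ^ i * S2poly (n - i) := by
  classical
  set D : ℕ → MvPolynomial (Fin 3) ℚ := fun m => Dsum m (fun e c => X 0 ^ e * X 2 ^ c) with hD
  have hS2 : ∀ m : ℕ, S2poly m = ∑ j ∈ Finset.range (m + 1),
      (m.choose j : MvPolynomial (Fin 3) ℚ) * (X 2 ^ j * D (m - j)) := by
    intro m
    have h2 : S2poly m = ∑ j ∈ Finset.range (m + 1),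
        (m.choose j : MvPolynomial (Fin 3) ℚ) *
          Dsum (m - j) (fun e c => X 0 ^ e * X 2 ^ (c + j)) :=
      master m (fun a _ c => X 0 ^ a * X 2 ^ c)
    rw [h2]
    refine Finset.sum_congr rfl fun j _ => ?_
    have : Dsum (m - j) (fun e c => X 0 ^ e * X 2 ^ (c + j))
        = Dsum (m - j) (fun e c => X 2 ^ j * (X 0 ^ e * X 2 ^ c)) := by
      refine Dsum_congr fun e c => ?_
      rw [pow_add]; ring
    rw [this, Dsum_mul]
  have hS3 : S3poly n = ∑ i ∈ Finset.range (n + 1),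
      (n.choose i : MvPolynomial (Fin 3) ℚ) * ((X 1 * X 2) ^ i * D (n - i)) := by
    have h3 : S3poly n = ∑ i ∈ Finset.range (n + 1),
        (n.choose i : MvPolynomial (Fin 3) ℚ) *
          Dsum (n - i) (fun e c => X 0 ^ e * X 1 ^ i * X 2 ^ (c + i)) :=
      master n (fun a b c => X 0 ^ a * X 1 ^ b * X 2 ^ c)
    rw [h3]
    refine Finset.sum_congr rfl fun i _ => ?_
    have : Dsum (n - i) (fun e c => X 0 ^ e * X 1 ^ i * X 2 ^ (c + i))
        = Dsum (n - i) (fun e c => (X 1 * X 2) ^ i * (X 0 ^ e * X 2 ^ c)) := by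
      refine Dsum_congr fun e c => ?_
      rw [pow_add, mul_pow]; ring
    rw [this, Dsum_mul]
  rw [hS3]
  have hswap := binom_swap n (X 1 * X 2 - X 2) (X 2) D
  rw [sub_add_cancel] at hswap
  rw [hswap]
  refine Finset.sum_congr rfl fun i _ => ?_
  rw [hS2 (n - i), Finset.mul_sum, Finset.mul_sum, mul_assoc, Finset.mul_sum, Finset.mul_sum]
end
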